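/- arXiv:1409.8108 — 6 statements merged into one kernel-verified Lean document; each statement's English description precedes it below -/
import Mathlib

section
/- Let α and β be partitions and r, s ≥ 1 positive integers. If β is obtained from α by removing a single hook of length rs, then β can also be obtained from α by successively removing r hooks, each of length s. -/
/-- A partition: a weakly decreasing list of positive integers. -/
def IsPartition (l : List ℕ) : Prop :=
  l.Pairwise (· ≥ ·) ∧ ∀ x ∈ l, 0 < x

/-- A partition of `n`. -/
def IsPartitionOf (n : ℕ) (l : List ℕ) : Prop :=
  IsPartition l ∧ l.sum = n

/-- The β-set of the partition `l` consisting of `m` beta-numbers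
(first-column hook lengths, padding `l` with zero parts up to length `m`). -/
def betaSetN (l : List ℕ) (m : ℕ) : Finset ℕ :=
  (Finset.range m).image (fun i => l.getD i 0 + (m - 1 - i))

/-- The canonical β-set of a partition. -/
def betaSet (l : List ℕ) : Finset ℕ := betaSetN l l.length

/-- The Murnaghan–Nakayama recursion, computing the character value of the
partition with β-set `B` on the cycle type given by the list.  Removing a
`k`-hook corresponds to replacing a beta-number `x` by `x - k`, with sign
`(-1)` to the number of beta-numbers strictly between `x - k` and `x`
(the leg length of the hook). -/
def MN : List ℕ → Finset ℕ → ℤ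
  | [], _ => 1
  | k :: μ, B =>
    ∑ x ∈ B.filter (fun x => k ≤ x ∧ x - k ∉ B),
      (-1) ^ (B.filter (fun y => x - k < y ∧ y < x)).card * MN μ (insert (x - k) (B.erase x))

/-- `charVal α μ` is the value `χ^α_μ` of the irreducible character of the
symmetric group labeled by the partition `α` on the class of cycle type `μ`. -/
def charVal (α μ : List ℕ) : ℤ := MN μ (betaSet α)

/-- The degree of the irreducible character labeled by `α`
(its value on the identity). -/
def charDegree (α : List ℕ) : ℤ := charVal α (List.replicate α.sum 1)

/-- The `r`-weight of a partition: the number of `r`-hooks removed in passing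
to the `r`-core, computed on the abacus. -/
def wt (r : ℕ) (α : List ℕ) : ℕ :=
  (∑ x ∈ betaSet α, x / r) -
    ∑ j ∈ Finset.range r, Nat.choose ((betaSet α).filter (fun x => x % r = j)).card 2

/-- The hook length `h_{i,j}(α)` of the node `(i,j)` (1-indexed). -/
def hookLen (α : List ℕ) (i j : ℕ) : ℤ :=
  (α.getD (i - 1) 0 : ℤ) + ((α.filter (fun a => j ≤ a)).length : ℤ) - i - j + 1

/-- `RemoveHook k α β`: the partition `β` is obtained from `α` by removing a
single hook of length `k`. -/
def RemoveHook (k : ℕ) (α β : List ℕ) : Prop :=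
  ∃ m, α.length ≤ m ∧ β.length ≤ m ∧ ∃ x ∈ betaSetN α m,
    k ≤ x ∧ x - k ∉ betaSetN α m ∧
    betaSetN β m = insert (x - k) ((betaSetN α m).erase x)

/-- `RemoveHooksSeq ks α β`: `β` is obtained from `α` by successively removing
hooks of lengths given, in order, by the list `ks`. -/
def RemoveHooksSeq : List ℕ → List ℕ → List ℕ → Prop
  | [], α, β => α = β
  | k :: ks, α, β => ∃ γ, IsPartition γ ∧ RemoveHook k α γ ∧ RemoveHooksSeq ks γ β

/-- The partition `λ_{n,p} = ((p^k)^{a_k}, …, 1^{a_0})` where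
`n = a_k p^k + … + a_0` is the `p`-adic expansion of `n`. -/
def padicType (p n : ℕ) : List ℕ :=
  ((List.range (Nat.digits p n).length).reverse).flatMap
    (fun i => List.replicate ((Nat.digits p n).getD i 0) (p ^ i))

/-- A cycle type `μ` of `S_n` is `p`-vanishing if every irreducible character
of `S_n` of degree divisible by `p` vanishes on the class of cycle type `μ`. -/
def PVanishing (p n : ℕ) (μ : List ℕ) : Prop :=
  ∀ α : List ℕ, IsPartitionOf n α → (p : ℤ) ∣ charDegree α → charVal α μ = 0

/-- One abacus move of step `s`. -/
def StepB (s : ℕ) (B B' : Finset ℕ) : Prop :=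
  ∃ y ∈ B, s ≤ y ∧ y - s ∉ B ∧ B' = insert (y - s) (B.erase y)

/-- `n` successive abacus moves of step `s`. -/
def ChainB (s : ℕ) : ℕ → Finset ℕ → Finset ℕ → Prop
  | 0, B, B' => B = B'
  | n+1, B, B' => ∃ C, StepB s B C ∧ ChainB s n C B'

def cnt (K : Finset ℕ) (t : ℕ) : ℕ := (K.filter (· < t)).card

lemma cnt_succ (K : Finset ℕ) (t : ℕ) :
    cnt K (t+1) = cnt K t + if t ∈ K then 1 else 0 := by
  unfold cnt
  by_cases h : t ∈ K
  · have he : K.filter (fun x => x < t+1) = insert t (K.filter (fun x => x < t)) := by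
      ext x
      simp only [Finset.mem_insert, Finset.mem_filter]
      constructor
      · rintro ⟨hx, hlt⟩
        rcases Nat.lt_succ_iff_lt_or_eq.1 hlt with h' | h'
        · exact Or.inr ⟨hx, h'⟩
        · exact Or.inl h'
      · rintro (rfl | ⟨hx, hlt⟩)
        · exact ⟨h, Nat.lt_succ_self _⟩
        · exact ⟨hx, Nat.lt_succ_of_lt hlt⟩
    rw [he, Finset.card_insert_of_notMem (by simp), if_pos h]
  · have he : K.filter (fun x => x < t+1) = K.filter (fun x => x < t) := by
      ext x
      simp only [Finset.mem_filter]
      constructor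
      · rintro ⟨hx, hlt⟩
        rcases Nat.lt_succ_iff_lt_or_eq.1 hlt with h' | rfl
        · exact ⟨hx, h'⟩
        · exact absurd hx h
      · rintro ⟨hx, hlt⟩; exact ⟨hx, Nat.lt_succ_of_lt hlt⟩
    rw [he, if_neg h, Nat.add_zero]

lemma cnt_mono (K : Finset ℕ) {t u : ℕ} (h : t ≤ u) : cnt K t ≤ cnt K u := by
  unfold cnt
  apply Finset.card_le_card
  intro x hx
  simp only [Finset.mem_filter] at hx ⊢
  exact ⟨hx.1, lt_of_lt_of_le hx.2 h⟩

lemma cnt_eq_card (K : Finset ℕ) {t : ℕ} (h : ∀ x ∈ K, x < t) : cnt K t = K.card := by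
  unfold cnt
  rw [Finset.filter_true_of_mem h]

lemma mem_iff_cnt (K : Finset ℕ) (t : ℕ) : t ∈ K ↔ cnt K t < cnt K (t+1) := by
  rw [cnt_succ]
  split_ifs with h <;> simp [h]

lemma eq_of_cnt_eq {K K' : Finset ℕ} (h : ∀ t, cnt K t = cnt K' t) : K = K' := by
  ext x
  rw [mem_iff_cnt, mem_iff_cnt, h, h]

lemma sum_add_cnt (K : Finset ℕ) (N : ℕ) (h : ∀ x ∈ K, x < N) :
    K.sum id + ∑ t ∈ Finset.range N, cnt K (t+1) = N * K.card := by
  unfold cnt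
  have : ∀ t, (K.filter (· < t+1)).card = ∑ x ∈ K, if x < t+1 then 1 else 0 := by
    intro t; rw [Finset.card_filter]
  simp_rw [this]
  rw [Finset.sum_comm]
  have : ∀ x ∈ K, (∑ t ∈ Finset.range N, if x < t+1 then 1 else 0) = N - x := by
    intro x hx
    have hxN := h x hx
    calc (∑ t ∈ Finset.range N, if x < t+1 then 1 else 0)
        = ∑ t ∈ Finset.range N, if x ≤ t then 1 else 0 := by
          refine Finset.sum_congr rfl fun t _ => by simp [Nat.lt_succ_iff]
      _ = ((Finset.range N).filter (fun t => x ≤ t)).card := by rw [Finset.card_filter]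
      _ = N - x := by
          have : Finset.filter (fun t => x ≤ t) (Finset.range N) = Finset.Ico x N := by
            ext t; simp [Finset.mem_Ico, and_comm]
          rw [this, Nat.card_Ico]
  rw [Finset.sum_congr rfl this]
  have h2 : ∀ x ∈ K, id x + (N - x) = N := fun x hx => by
    have := h x hx; simp only [id]; omega
  rw [← Finset.sum_add_distrib, Finset.sum_congr rfl h2, Finset.sum_const, smul_eq_mul, mul_comm]

lemma cnt_zero (K : Finset ℕ) : cnt K 0 = 0 := by
  unfold cnt
  simp

lemma cnt_le_card (K : Finset ℕ) (t : ℕ) : cnt K t ≤ K.card :=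
  Finset.card_le_card (Finset.filter_subset _ _)

lemma cnt_insert_erase {K : Finset ℕ} {a b : ℕ} (ha : a ∉ K) (hb : b ∈ K) (t : ℕ) :
    cnt (insert a (K.erase b)) t + (if b < t then 1 else 0)
      = cnt K t + (if a < t then 1 else 0) := by
  unfold cnt
  rw [Finset.filter_insert, Finset.filter_erase]
  by_cases hat : a < t <;> by_cases hbt : b < t <;>
    simp only [hat, hbt, if_true, if_false, decide_true, decide_false]
  · rw [Finset.card_insert_of_notMem (by simp [Finset.mem_erase, Finset.mem_filter, ha]),
      Finset.card_erase_of_mem (s := K.filter (fun x => x < t)) (Finset.mem_filter.2 ⟨hb, hbt⟩)]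
    have : 0 < (K.filter (fun x => x < t)).card :=
      Finset.card_pos.2 ⟨b, Finset.mem_filter.2 ⟨hb, hbt⟩⟩
    omega
  · rw [Finset.card_insert_of_notMem (by simp [Finset.mem_erase, Finset.mem_filter, ha]),
      Finset.erase_eq_of_notMem (by simp [Finset.mem_filter, hbt])]
  · rw [Finset.card_erase_of_mem (s := K.filter (fun x => x < t)) (Finset.mem_filter.2 ⟨hb, hbt⟩)]
    have : 0 < (K.filter (fun x => x < t)).card :=
      Finset.card_pos.2 ⟨b, Finset.mem_filter.2 ⟨hb, hbt⟩⟩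
    omega
  · rw [Finset.erase_eq_of_notMem (by simp [Finset.mem_filter, hbt])]

/-- Core lemma: with pointwise count dominance and sum difference `n`,
`K'` is reachable from `K` in `n` unit moves. -/
lemma core : ∀ (n : ℕ) (K K' : Finset ℕ), K.card = K'.card →
    (∀ t, cnt K t ≤ cnt K' t) → K.sum id = K'.sum id + n → ChainB 1 n K K' := by
  intro n
  induction n with
  | zero =>
    intro K K' hcard hdom hsum
    rw [Nat.add_zero] at hsum
    set N := (K ∪ K').sup id + 1 with hN
    have hKN : ∀ x ∈ K, x < N := fun x hx =>
      Nat.lt_succ_of_le (Finset.le_sup (f := id) (Finset.mem_union_left _ hx))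
    have hK'N : ∀ x ∈ K', x < N := fun x hx =>
      Nat.lt_succ_of_le (Finset.le_sup (f := id) (Finset.mem_union_right _ hx))
    have h1 := sum_add_cnt K N hKN
    rw [hcard] at h1
    have h2 := sum_add_cnt K' N hK'N
    have hsums : ∑ t ∈ Finset.range N, cnt K (t+1) = ∑ t ∈ Finset.range N, cnt K' (t+1) := by
      omega
    have heq : ∀ t ∈ Finset.range N, cnt K (t+1) = cnt K' (t+1) :=
      (Finset.sum_eq_sum_iff_of_le (fun t _ => hdom (t+1))).1 hsums
    have hcnt : ∀ t, cnt K t = cnt K' t := by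
      intro t
      match t with
      | 0 => rw [cnt_zero, cnt_zero]
      | t+1 =>
        by_cases ht : t < N
        · exact heq t (Finset.mem_range.2 ht)
        · rw [cnt_eq_card K (fun x hx => lt_of_lt_of_le (hKN x hx) (by omega)),
            cnt_eq_card K' (fun x hx => lt_of_lt_of_le (hK'N x hx) (by omega)), hcard]
    exact eq_of_cnt_eq hcnt
  | succ n ih =>
    intro K K' hcard hdom hsum
    classical
    have hne : ∃ t, cnt K t < cnt K' t := by
      by_contra h'
      push_neg at h'
      have : K = K' := eq_of_cnt_eq (fun t => le_antisymm (hdom t) (h' t))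
      subst this
      omega
    set t0 := Nat.find hne with ht0def
    have ht0 : cnt K t0 < cnt K' t0 := Nat.find_spec hne
    have ht0pos : 0 < t0 := by
      rcases Nat.eq_zero_or_pos t0 with h0 | h0
      · rw [h0, cnt_zero, cnt_zero] at ht0; omega
      · exact h0
    have hprev : cnt K (t0-1) = cnt K' (t0-1) :=
      le_antisymm (hdom _) (le_of_not_gt (Nat.find_min hne (by omega)))
    have hsucc : t0 - 1 + 1 = t0 := by omega
    have hbound : t0 - 1 ∉ K := by
      intro hmem
      have e1 := cnt_succ K (t0-1)
      have e2 := cnt_succ K' (t0-1)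
      rw [hsucc] at e1 e2
      rw [if_pos hmem] at e1
      by_cases h2 : t0 - 1 ∈ K'
      · rw [if_pos h2] at e2; omega
      · rw [if_neg h2] at e2; omega
    have hK : ∃ k, k ∈ K ∧ t0 ≤ k := by
      by_contra h'
      push_neg at h'
      have : cnt K t0 = K.card := cnt_eq_card K (fun x hx => h' x hx)
      have := cnt_le_card K' t0
      omega
    set k := Nat.find hK with hkdef
    obtain ⟨hkK, hkt0⟩ : k ∈ K ∧ t0 ≤ k := Nat.find_spec hK
    have hkmin : ∀ j, j < k → ¬(j ∈ K ∧ t0 ≤ j) := fun j hj => Nat.find_min hK hj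
    have hk1 : k - 1 ∉ K := by
      by_cases hlt : k - 1 < t0
      · have : k - 1 = t0 - 1 := by omega
        rw [this]; exact hbound
      · intro hmem
        exact hkmin (k-1) (by omega) ⟨hmem, by omega⟩
    have hk0 : 1 ≤ k := le_trans ht0pos hkt0
    set L := insert (k-1) (K.erase k) with hL
    have hstep : StepB 1 K L := ⟨k, hkK, hk0, hk1, rfl⟩
    have hkey := cnt_insert_erase hk1 hkK
    have hcntKk : cnt K k = cnt K t0 := by
      unfold cnt
      congr 1
      ext x
      simp only [Finset.mem_filter]
      constructor
      · rintro ⟨hx, hxk⟩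
        refine ⟨hx, ?_⟩
        by_contra h'
        exact hkmin x hxk ⟨hx, by omega⟩
      · rintro ⟨hx, hxt⟩; exact ⟨hx, by omega⟩
    have hdomL : ∀ t, cnt L t ≤ cnt K' t := by
      intro t
      have hkt := hkey t
      rw [← hL] at hkt
      by_cases h1 : t ≤ k - 1
      · rw [if_neg (by omega), if_neg (by omega)] at hkt
        have := hdom t
        omega
      · by_cases h2 : k < t
        · rw [if_pos h2, if_pos (by omega)] at hkt
          have := hdom t
          omega
        · have htk : t = k := by omega
          rw [if_neg (by omega), if_pos (by omega)] at hkt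
          have h3 : cnt K' t0 ≤ cnt K' t := cnt_mono _ (by omega)
          have h4 : cnt K k = cnt K t0 := hcntKk
          rw [← htk] at h4
          omega
    have hcardL : L.card = K'.card := by
      rw [hL, Finset.card_insert_of_notMem (by simp [Finset.mem_erase, hk1]),
        Finset.card_erase_of_mem hkK]
      have : 0 < K.card := Finset.card_pos.2 ⟨k, hkK⟩
      omega
    have hsumL : L.sum id = K'.sum id + n := by
      have e1 : (K.erase k).sum id + k = K.sum id := Finset.sum_erase_add _ _ hkK
      have e2 : L.sum id = (k-1) + (K.erase k).sum id :=
        Finset.sum_insert (by simp [Finset.mem_erase, hk1])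
      omega
    exact ⟨L, hstep, ih L K' hcardL hdomL hsumL⟩

lemma emb_inj (s c : ℕ) (hs : 0 < s) : Function.Injective (fun k => k * s + c) := by
  intro a b h
  simp only [Nat.add_right_cancel_iff] at h
  exact Nat.eq_of_mul_eq_mul_right hs h

lemma emb_mod (s c k : ℕ) (hc : c < s) : (k * s + c) % s = c := by
  rw [Nat.add_comm, Nat.add_mul_mod_self_right]
  exact Nat.mod_eq_of_lt hc

lemma lift_step (s c : ℕ) (hc : c < s) (off : Finset ℕ) (hoff : ∀ x ∈ off, x % s ≠ c)
    {K K' : Finset ℕ} (h : StepB 1 K K') :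
    StepB s (off ∪ K.image (fun k => k * s + c)) (off ∪ K'.image (fun k => k * s + c)) := by
  obtain ⟨k, hk, hk1, hk1n, rfl⟩ := h
  have hs : 0 < s := by omega
  have hmul : (k - 1) * s + s = k * s := by
    have h1 : k - 1 + 1 = k := by omega
    calc (k-1) * s + s = (k - 1 + 1) * s := by ring
      _ = k * s := by rw [h1]
  have hsub : k * s + c - s = (k - 1) * s + c := by omega
  have hinj := emb_inj s c hs
  refine ⟨k * s + c, Finset.mem_union.2 (Or.inr (Finset.mem_image_of_mem _ hk)), ?_, ?_, ?_⟩
  · have : 1 * s ≤ k * s := Nat.mul_le_mul_right s hk1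
    omega
  · rw [hsub]
    rw [Finset.mem_union]
    rintro (hmem | hmem)
    · exact hoff _ hmem (emb_mod s c (k-1) hc)
    · obtain ⟨j, hj, hje⟩ := Finset.mem_image.1 hmem
      exact hk1n (by rwa [hinj hje] at hj)
  · rw [hsub, Finset.image_insert, Finset.image_erase hinj, Finset.erase_union_distrib,
      Finset.erase_eq_of_notMem (fun hmem => hoff _ hmem (emb_mod s c k hc)),
      Finset.union_insert]

lemma lift_chain (s c : ℕ) (hc : c < s) (off : Finset ℕ) (hoff : ∀ x ∈ off, x % s ≠ c) :
    ∀ (n : ℕ) (K K' : Finset ℕ), ChainB 1 n K K' →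
      ChainB s n (off ∪ K.image (fun k => k * s + c)) (off ∪ K'.image (fun k => k * s + c)) := by
  intro n
  induction n with
  | zero => intro K K' h; rw [show K = K' from h]; rfl
  | succ n ih =>
    intro K K' h
    obtain ⟨C, hstep, hchain⟩ := h
    exact ⟨off ∪ C.image (fun k => k * s + c), lift_step s c hc off hoff hstep, ih _ _ hchain⟩

/-- Removing a single `r*s`-hook on the abacus can be done in `r` steps of size `s`. -/
lemma chainB_of_hook (s r x : ℕ) (hs : 1 ≤ s) (B : Finset ℕ) (hx : x ∈ B)
    (hrs : r * s ≤ x) (hnot : x - r * s ∉ B) :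
    ChainB s r B (insert (x - r * s) (B.erase x)) := by
  classical
  set c := x % s with hc_def
  have hc : c < s := Nat.mod_lt x (by omega)
  set e : ℕ → ℕ := fun k => k * s + c with he_def
  have hinj : Function.Injective e := emb_inj s c (by omega)
  set off := B.filter (fun y => ¬ y % s = c) with hoff_def
  have hoff : ∀ y ∈ off, y % s ≠ c := fun y hy => (Finset.mem_filter.1 hy).2
  set K := (B.filter (fun y => y % s = c)).image (fun y => y / s) with hK_def
  have himg : K.image e = B.filter (fun y => y % s = c) := by
    rw [hK_def, Finset.image_image]
    have : ∀ y ∈ B.filter (fun y => y % s = c), (e ∘ fun y => y / s) y = id y := by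
      intro y hy
      have hy2 := (Finset.mem_filter.1 hy).2
      simp only [Function.comp, he_def, id]
      rw [← hy2, Nat.mul_comm]
      exact Nat.div_add_mod y s
    rw [Finset.image_congr this, Finset.image_id]
  have hB : B = off ∪ K.image e := by
    rw [himg, hoff_def, Finset.union_comm, Finset.filter_union_filter_not_eq]
  -- the bead to move
  have hxc : x % s = c := rfl
  have hxK : x / s ∈ K := Finset.mem_image_of_mem _ (Finset.mem_filter.2 ⟨hx, hxc⟩)
  have hdm : x / s * s + c = x := by rw [Nat.mul_comm]; exact Nat.div_add_mod x s
  have hrle : r ≤ x / s := by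
    by_contra h'
    push_neg at h'
    have : x / s + 1 ≤ r := h'
    have h2 := Nat.mul_le_mul_right s this
    have h3 : (x / s + 1) * s = x / s * s + s := by ring
    omega
  have hea : e (x / s - r) = x - r * s := by
    have h1 : (x / s - r) * s + r * s = x / s * s := by
      calc (x / s - r) * s + r * s = (x / s - r + r) * s := by ring
        _ = x / s * s := by rw [Nat.sub_add_cancel hrle]
    simp only [he_def]
    omega
  have hek : e (x / s) = x := hdm
  have haK : x / s - r ∉ K := by
    intro hmem
    have : e (x / s - r) ∈ K.image e := Finset.mem_image_of_mem _ hmem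
    rw [himg, hea] at this
    exact hnot (Finset.mem_filter.1 this).1
  set K' := insert (x / s - r) (K.erase (x / s)) with hK'_def
  have hchain1 : ChainB 1 r K K' := by
    apply core
    · rw [hK'_def, Finset.card_insert_of_notMem (by simp [Finset.mem_erase, haK]),
        Finset.card_erase_of_mem hxK]
      have : 0 < K.card := Finset.card_pos.2 ⟨_, hxK⟩
      omega
    · intro t
      have hkey := cnt_insert_erase haK hxK t
      rw [← hK'_def] at hkey
      by_cases h1 : x / s < t
      · rw [if_pos h1, if_pos (by omega)] at hkey
        omega
      · rw [if_neg h1] at hkey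
        by_cases h2 : x / s - r < t
        · rw [if_pos h2] at hkey; omega
        · rw [if_neg h2] at hkey; omega
    · have e1 : (K.erase (x / s)).sum id + (x / s) = K.sum id := Finset.sum_erase_add _ _ hxK
      have e2 : K'.sum id = (x / s - r) + (K.erase (x / s)).sum id := by
        rw [hK'_def]
        exact Finset.sum_insert (by simp [Finset.mem_erase, haK])
      omega
  have hchain := lift_chain s c hc off hoff r K K' hchain1
  rw [← hB] at hchain
  have hfinal : off ∪ K'.image e = insert (x - r * s) (B.erase x) := by
    rw [hK'_def, Finset.image_insert, Finset.image_erase hinj, hea, hek,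
      Finset.union_insert]
    congr 1
    rw [hB, Finset.erase_union_distrib,
      Finset.erase_eq_of_notMem (fun hmem => hoff _ hmem hxc)]
  rwa [hfinal] at hchain


lemma getD_anti {l : List ℕ} (hl : l.Pairwise (· ≥ ·)) {i j : ℕ} (h : i ≤ j) :
    l.getD j 0 ≤ l.getD i 0 := by
  by_cases hj : j < l.length
  · have hi : i < l.length := lt_of_le_of_lt h hj
    rw [List.getD_eq_getElem _ _ hj, List.getD_eq_getElem _ _ hi]
    rcases eq_or_lt_of_le h with rfl | hlt
    · exact le_refl _
    · exact hl.rel_get_of_lt (a := ⟨i, hi⟩) (b := ⟨j, hj⟩) hlt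
  · rw [List.getD_eq_default _ _ (by omega)]
    exact Nat.zero_le _

lemma card_betaSetN {l : List ℕ} {m : ℕ} (hl : l.Pairwise (· ≥ ·)) (hm : l.length ≤ m) :
    (betaSetN l m).card = m := by
  rw [betaSetN, Finset.card_image_of_injOn, Finset.card_range]
  intro i hi j hj hij
  simp only [Finset.mem_coe, Finset.mem_range] at hi hj
  have hij' : l.getD i 0 + (m - 1 - i) = l.getD j 0 + (m - 1 - j) := hij
  clear hij
  by_contra hne
  rcases Nat.lt_or_ge i j with hlt | hge
  · have := getD_anti hl (le_of_lt hlt)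
    omega
  · have hlt : j < i := by omega
    have := getD_anti hl (le_of_lt hlt)
    omega

lemma sorted_lt_gap {L : List ℕ} (h : L.Pairwise (· < ·)) :
    ∀ (d i : ℕ), i + d < L.length → L.getD i 0 + d ≤ L.getD (i+d) 0 := by
  intro d
  induction d with
  | zero => intro i hi; simp
  | succ d ih =>
    intro i hi
    have h1 := ih i (by omega)
    have h2 : L.getD (i+d) 0 < L.getD (i+d+1) 0 := by
      rw [List.getD_eq_getElem _ _ (show i+d < L.length by omega),
        List.getD_eq_getElem _ _ (show i+d+1 < L.length by omega)]
      exact h.rel_get_of_lt (a := ⟨i+d, by omega⟩) (b := ⟨i+d+1, by omega⟩) (by simp)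
    have : i + (d+1) = i + d + 1 := by omega
    rw [this]
    omega

lemma sorted_lt_ge_index {L : List ℕ} (h : L.Pairwise (· < ·)) (i : ℕ) (hi : i < L.length) :
    i ≤ L.getD i 0 := by
  have h0 := sorted_lt_gap h i 0 (by omega)
  rw [Nat.zero_add] at h0
  omega

lemma getD_takeWhile (l : List ℕ) (hl : l.Pairwise (· ≥ ·)) (i : ℕ) :
    (l.takeWhile (fun a => a ≠ 0)).getD i 0 = l.getD i 0 := by
  induction l generalizing i with
  | nil => rfl
  | cons a tl ih =>
    by_cases ha : a = 0
    · subst ha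
      rw [show List.takeWhile (fun a => a ≠ 0) (0 :: tl) = [] from by simp [List.takeWhile]]
      match i with
      | 0 => rfl
      | i+1 =>
        simp only [List.getD_nil, List.getD_cons_succ]
        by_cases hi : i < tl.length
        · rw [List.getD_eq_getElem _ _ hi]
          have hmem : tl[i] ∈ tl := List.getElem_mem _
          have := List.rel_of_pairwise_cons hl hmem
          omega
        · rw [List.getD_eq_default _ _ (by omega)]
    · rw [show List.takeWhile (fun a => a ≠ 0) (a :: tl) =
        a :: List.takeWhile (fun a => a ≠ 0) tl from by simp [List.takeWhile, ha]]
      match i with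
      | 0 => rfl
      | i+1 =>
        simp only [List.getD_cons_succ]
        exact ih hl.of_cons i

/-- Every finset of naturals of cardinality `m` is the β-set (with `m` beta
numbers) of a unique partition; here we construct it. -/
lemma exists_partition_of_finset (C : Finset ℕ) :
    ∃ γ : List ℕ, IsPartition γ ∧ γ.length ≤ C.card ∧ betaSetN γ C.card = C := by
  classical
  set m := C.card with hm
  set L := C.sort (· ≤ ·) with hL
  have hLlen : L.length = m := Finset.length_sort _
  have hLs : L.Pairwise (· < ·) := (Finset.sortedLT_sort C).pairwise
  set f : ℕ → ℕ := fun i => L.getD (m - 1 - i) 0 - (m - 1 - i) with hf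
  set gf : List ℕ := (List.range m).map f with hgf
  have hkey : ∀ i j, i ≤ j → j < m → f j ≤ f i := by
    intro i j hij hj
    simp only [hf]
    set p := m - 1 - i with hp
    set q := m - 1 - j with hq
    have hqp : q ≤ p := by omega
    have hgap := sorted_lt_gap hLs (p - q) q (by omega)
    have hqq : q + (p - q) = p := by omega
    rw [hqq] at hgap
    have h1 := sorted_lt_ge_index hLs q (by omega)
    have h2 := sorted_lt_ge_index hLs p (by omega)
    omega
  have hgfs : gf.Pairwise (· ≥ ·) := by
    rw [hgf, List.pairwise_map]
    have := List.pairwise_lt_range (n := m)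
    refine this.imp_of_mem ?_
    intro i j hi hj hij
    exact hkey i j (le_of_lt hij) (List.mem_range.1 hj)
  have hgflen : gf.length = m := by simp [hgf]
  set γ := gf.takeWhile (fun a => a ≠ 0) with hγ
  have hγs : γ.Pairwise (· ≥ ·) := List.Pairwise.sublist (List.IsPrefix.sublist (List.takeWhile_prefix _)) hgfs
  have hγpos : ∀ x ∈ γ, 0 < x := by
    intro x hx
    have := List.mem_takeWhile_imp hx
    simp at this
    omega
  have hγlen : γ.length ≤ m := le_trans (List.Sublist.length_le (List.takeWhile_prefix _).sublist) (le_of_eq hgflen)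
  have hγgetD : ∀ i, γ.getD i 0 = gf.getD i 0 := getD_takeWhile gf hgfs
  refine ⟨γ, ⟨hγs, hγpos⟩, hγlen, ?_⟩
  rw [betaSetN]
  ext x
  simp only [Finset.mem_image, Finset.mem_range]
  constructor
  · rintro ⟨i, hi, rfl⟩
    rw [hγgetD i, hgf, List.getD_eq_getElem _ _ (by simp; omega)]
    simp only [List.getElem_map, List.getElem_range]
    have hfi : f i + (m - 1 - i) = L.getD (m-1-i) 0 := by
      have := sorted_lt_ge_index hLs (m-1-i) (by omega)
      simp only [hf]
      omega
    rw [hfi]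
    rw [List.getD_eq_getElem _ _ (by omega)]
    have : L[m-1-i] ∈ L := List.getElem_mem _
    rwa [Finset.mem_sort] at this
  · intro hx
    have hmem : x ∈ L := (Finset.mem_sort _).2 hx
    obtain ⟨j, hj, hjx⟩ := List.getElem_of_mem hmem
    have hjm : j < m := by omega
    refine ⟨m - 1 - j, by omega, ?_⟩
    have hidx : m - 1 - (m - 1 - j) = j := by omega
    rw [hγgetD, hgf, List.getD_eq_getElem _ _ (by simp; omega)]
    simp only [List.getElem_map, List.getElem_range, hf, hidx]
    have hge := sorted_lt_ge_index hLs j (by omega)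
    rw [List.getD_eq_getElem _ _ (by omega)] at hge ⊢
    rw [hjx] at hge ⊢
    omega


lemma chain_to_seq (s m : ℕ) (β : List ℕ) (hβ : IsPartition β) (hβm : β.length ≤ m) :
    ∀ (n : ℕ) (γ : List ℕ), IsPartition γ → γ.length ≤ m →
      ChainB s (n+1) (betaSetN γ m) (betaSetN β m) →
      RemoveHooksSeq (List.replicate (n+1) s) γ β := by
  intro n
  induction n with
  | zero =>
    intro γ hγ hγm hchain
    obtain ⟨C, ⟨y, hy, hsy, hyn, hC⟩, hC2⟩ := hchain
    have hC2' : C = betaSetN β m := hC2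
    rw [List.replicate_succ, List.replicate_zero]
    refine ⟨β, hβ, ⟨m, hγm, hβm, y, hy, hsy, hyn, by rw [← hC2']; exact hC⟩, rfl⟩
  | succ n ih =>
    intro γ hγ hγm hchain
    obtain ⟨C, ⟨y, hy, hsy, hyn, hC⟩, hC2⟩ := hchain
    have hBcard : (betaSetN γ m).card = m := card_betaSetN hγ.1 hγm
    have hcard : C.card = m := by
      rw [hC, Finset.card_insert_of_notMem (fun hmem => hyn (Finset.mem_of_mem_erase hmem)),
        Finset.card_erase_of_mem hy, hBcard]
      have : 0 < m := by
        rw [← hBcard]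
        exact Finset.card_pos.2 ⟨y, hy⟩
      omega
    obtain ⟨δ, hδ, hδlen, hδbeta⟩ := exists_partition_of_finset C
    rw [hcard] at hδlen hδbeta
    rw [List.replicate_succ]
    refine ⟨δ, hδ, ⟨m, hγm, hδlen, y, hy, hsy, hyn, by rw [hδbeta]; exact hC⟩, ?_⟩
    exact ih δ hδ hδlen (by rw [hδbeta]; exact hC2)


/-- removing one `rs`-hook can be realised as removing `r`
hooks of length `s` in succession. -/
theorem removeHook_mul (α β : List ℕ) (r s : ℕ) (hα : IsPartition α)
    (hβ : IsPartition β) (hr : 1 ≤ r) (hs : 1 ≤ s)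
    (h : RemoveHook (r * s) α β) :
    RemoveHooksSeq (List.replicate r s) α β := by
  obtain ⟨m, hαm, hβm, x, hx, hrsx, hnot, hbeta⟩ := h
  have hchain := chainB_of_hook s r x hs (betaSetN α m) hx hrsx hnot
  rw [← hbeta] at hchain
  obtain ⟨r', rfl⟩ : ∃ r', r = r' + 1 := ⟨r - 1, by omega⟩
  exact chain_to_seq s m β hβ hβm r' α hα hαm hchain
end

section
/- Let α be a partition and r, s positive integers. If β is obtained from α by removing a hook of length rs, then the r-weight of β equals the r-weight of α minus s. -/
section WtAux

open Finset

/-- Sum of `x / r` over a β-set. -/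
private def sdiv (r : ℕ) (B : Finset ℕ) : ℕ := ∑ x ∈ B, x / r

/-- Sum of binomials over residue classes. -/
private def csum (r : ℕ) (B : Finset ℕ) : ℕ :=
  ∑ j ∈ Finset.range r, Nat.choose (B.filter (fun x => x % r = j)).card 2

private lemma choose_le_sum (s : Finset ℕ) : Nat.choose s.card 2 ≤ ∑ x ∈ s, x := by
  induction s using Finset.induction_on_max with
  | empty => simp
  | insert a s ha ih =>
    have hns : a ∉ s := fun h => lt_irrefl a (ha a h)
    have hs : s.card ≤ a := by
      have : s ⊆ Finset.range a := fun x hx => Finset.mem_range.mpr (ha x hx)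
      simpa using Finset.card_le_card this
    have hch : (s.card + 1).choose 2 = s.card + s.card.choose 2 := by
      rw [Nat.choose_succ_succ, Nat.choose_one_right]
    rw [Finset.card_insert_of_notMem hns, Finset.sum_insert hns, hch]
    omega

private lemma csum_le_sdiv (r : ℕ) (hr : 0 < r) (B : Finset ℕ) : csum r B ≤ sdiv r B := by
  have hmaps : ∀ x ∈ B, x % r ∈ Finset.range r := fun x _ =>
    Finset.mem_range.mpr (Nat.mod_lt x hr)
  have hsplit : sdiv r B =
      ∑ j ∈ Finset.range r, ∑ x ∈ B.filter (fun x => x % r = j), x / r :=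
    (Finset.sum_fiberwise_of_maps_to hmaps _).symm
  rw [hsplit, csum]
  refine Finset.sum_le_sum fun j _ => ?_
  set s := B.filter (fun x => x % r = j) with hsdef
  have hinj : Set.InjOn (· / r) ↑s := by
    intro a ha b hb hab
    simp only [hsdef, Finset.coe_filter, Set.mem_setOf_eq] at ha hb
    have hab' : a / r = b / r := hab
    calc a = r * (a / r) + a % r := (Nat.div_add_mod a r).symm
      _ = r * (b / r) + b % r := by rw [hab', ha.2, hb.2]
      _ = b := Nat.div_add_mod b r
  calc s.card.choose 2 = ((s.image (· / r)).card).choose 2 := by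
        rw [Finset.card_image_of_injOn hinj]
    _ ≤ ∑ y ∈ s.image (· / r), y := choose_le_sum _
    _ = ∑ x ∈ s, x / r := Finset.sum_image (fun a ha b hb => hinj ha hb)

/-- The integer-valued weight of a β-set. -/
private def gZ (r : ℕ) (B : Finset ℕ) : ℤ := (sdiv r B : ℤ) - (csum r B : ℤ)

private lemma succ_mod (r : ℕ) (hr : 0 < r) (x : ℕ) :
    (x + 1) % r = if x % r = r - 1 then 0 else x % r + 1 := by
  have h1 := Nat.div_add_mod x r
  have h2 : x % r < r := Nat.mod_lt x hr
  by_cases h : x % r = r - 1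
  · have hx : x + 1 = r * (x / r + 1) := by rw [Nat.mul_succ]; omega
    rw [if_pos h, hx, Nat.mul_mod_right]
  · have hlt : x % r + 1 < r := by omega
    have hx : x + 1 = r * (x / r) + (x % r + 1) := by omega
    rw [if_neg h, hx, Nat.mul_add_mod, Nat.mod_eq_of_lt hlt]

private lemma succ_div (r : ℕ) (hr : 0 < r) (x : ℕ) :
    (x + 1) / r = x / r + if x % r = r - 1 then 1 else 0 := by
  have h1 := Nat.div_add_mod x r
  have h2 : x % r < r := Nat.mod_lt x hr
  by_cases h : x % r = r - 1
  · have hx : x + 1 = r * (x / r) + r := by omega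
    rw [if_pos h, hx, Nat.mul_add_div hr (x / r) r, Nat.div_self hr]
  · have hlt : x % r + 1 < r := by omega
    have hx : x + 1 = r * (x / r) + (x % r + 1) := by omega
    rw [if_neg h, hx, Nat.mul_add_div hr (x / r) (x % r + 1),
      Nat.div_eq_of_lt hlt]

private lemma sdiv_shift (r : ℕ) (hr : 0 < r) (B : Finset ℕ) :
    sdiv r (insert 0 (B.image (· + 1))) =
      sdiv r B + (B.filter (fun x => x % r = r - 1)).card := by
  have h0 : (0 : ℕ) ∉ B.image (· + 1) := by simp
  have hinj : ∀ x ∈ B, ∀ y ∈ B, x + 1 = y + 1 → x = y := fun x _ y _ h => by omega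
  rw [sdiv, Finset.sum_insert h0, Finset.sum_image hinj]
  simp only [Nat.zero_div, zero_add]
  rw [Finset.card_filter]
  simp only [succ_div r hr]
  rw [Finset.sum_add_distrib]
  rfl

private lemma card_shift_zero (r : ℕ) (hr : 0 < r) (B : Finset ℕ) :
    ((insert 0 (B.image (· + 1))).filter (fun x => x % r = 0)).card =
      (B.filter (fun x => x % r = r - 1)).card + 1 := by
  rw [Finset.filter_insert, if_pos (Nat.zero_mod r), Finset.filter_image]
  have h0 : (0 : ℕ) ∉ (B.filter (fun a => (a + 1) % r = 0)).image (· + 1) := by simp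
  rw [Finset.card_insert_of_notMem h0,
    Finset.card_image_of_injOn (fun x _ y _ h => by omega)]
  congr 2
  apply Finset.filter_congr
  intro x _
  rw [succ_mod r hr]
  by_cases h : x % r = r - 1 <;> simp [h] <;> omega

private lemma card_shift_pos (r : ℕ) (hr : 0 < r) (B : Finset ℕ) (j : ℕ) (hj : 0 < j)
    (hjr : j < r) :
    ((insert 0 (B.image (· + 1))).filter (fun x => x % r = j)).card =
      (B.filter (fun x => x % r = j - 1)).card := by
  rw [Finset.filter_insert, if_neg (by rw [Nat.zero_mod]; omega), Finset.filter_image,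
    Finset.card_image_of_injOn (fun x _ y _ h => by omega)]
  congr 1
  apply Finset.filter_congr
  intro x _
  rw [succ_mod r hr]
  by_cases h : x % r = r - 1 <;> simp [h] <;> omega

private lemma csum_shift (r : ℕ) (hr : 0 < r) (B : Finset ℕ) :
    csum r (insert 0 (B.image (· + 1))) =
      csum r B + (B.filter (fun x => x % r = r - 1)).card := by
  obtain ⟨n, rfl⟩ : ∃ n, r = n + 1 := ⟨r - 1, by omega⟩
  show csum (n + 1) (insert 0 (B.image (· + 1))) =
      csum (n + 1) B + (B.filter (fun x => x % (n + 1) = n)).card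
  rw [csum, csum, Finset.sum_range_succ' _ n, Finset.sum_range_succ _ n]
  have hc0 : ((insert 0 (B.image (· + 1))).filter (fun x => x % (n + 1) = 0)).card =
      (B.filter (fun x => x % (n + 1) = n)).card + 1 := by
    simpa using card_shift_zero (n + 1) hr B
  have hcp : ∀ i ∈ Finset.range n,
      (((insert 0 (B.image (· + 1))).filter (fun x => x % (n + 1) = i + 1)).card).choose 2 =
      ((B.filter (fun x => x % (n + 1) = i)).card).choose 2 := by
    intro i hi
    have hi' : i < n := Finset.mem_range.mp hi
    rw [card_shift_pos (n + 1) hr B (i + 1) (by omega) (by omega)]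
    simp
  rw [Finset.sum_congr rfl hcp, hc0]
  have key : ((B.filter (fun x => x % (n + 1) = n)).card + 1).choose 2 =
      (B.filter (fun x => x % (n + 1) = n)).card +
        ((B.filter (fun x => x % (n + 1) = n)).card).choose 2 := by
    rw [Nat.choose_succ_succ, Nat.choose_one_right]
  rw [key]
  omega

private lemma gZ_shift (r : ℕ) (hr : 0 < r) (B : Finset ℕ) :
    gZ r (insert 0 (B.image (· + 1))) = gZ r B := by
  rw [gZ, gZ, sdiv_shift r hr, csum_shift r hr]
  push_cast
  ring

private lemma betaSetN_succ (l : List ℕ) (m : ℕ) (hm : l.length ≤ m) :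
    betaSetN l (m + 1) = insert 0 ((betaSetN l m).image (· + 1)) := by
  rw [betaSetN, Finset.range_add_one, Finset.image_insert,
    show l.getD m 0 + (m + 1 - 1 - m) = 0 by
      rw [List.getD_eq_default _ _ hm]; omega]
  congr 1
  rw [betaSetN, Finset.image_image]
  apply Finset.image_congr
  intro i hi
  simp only [Finset.coe_range, Set.mem_Iio] at hi
  simp only [Function.comp_apply]
  omega

private lemma gZ_betaSetN (r : ℕ) (hr : 0 < r) (l : List ℕ) (m : ℕ) (hm : l.length ≤ m) :
    gZ r (betaSetN l m) = gZ r (betaSet l) := by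
  induction m, hm using Nat.le_induction with
  | base => rfl
  | succ m hm ih => rw [betaSetN_succ l m hm, gZ_shift r hr, ih]

private lemma gZ_hook (r s : ℕ) (hr : 0 < r) (hs : 0 < s) (B : Finset ℕ) (x : ℕ)
    (hx : x ∈ B) (hk : r * s ≤ x) (hnx : x - r * s ∉ B) :
    gZ r (insert (x - r * s) (B.erase x)) = gZ r B - s := by
  have hrs : 0 < r * s := Nat.mul_pos hr hs
  have hne : x - r * s ∉ B.erase x := fun h => hnx (Finset.mem_of_mem_erase h)
  have hdiv : (x - r * s) / r = x / r - s := Nat.sub_mul_div x r s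
  have hsle : s ≤ x / r := (Nat.le_div_iff_mul_le hr).mpr (by rw [Nat.mul_comm]; exact hk)
  have hmod : (x - r * s) % r = x % r := Nat.sub_mul_mod hk
  -- the sdiv part
  have hsd : sdiv r (insert (x - r * s) (B.erase x)) + s = sdiv r B := by
    have h1 : sdiv r (insert (x - r * s) (B.erase x)) =
        (x - r * s) / r + ∑ y ∈ B.erase x, y / r := Finset.sum_insert hne
    have h2 : (∑ y ∈ B.erase x, y / r) + x / r = sdiv r B :=
      Finset.sum_erase_add B _ hx
    omega
  -- the csum part
  have hcs : csum r (insert (x - r * s) (B.erase x)) = csum r B := by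
    rw [csum, csum]
    refine Finset.sum_congr rfl fun j _ => ?_
    congr 1
    by_cases hj : x % r = j
    · rw [Finset.filter_insert, if_pos (by rw [hmod]; exact hj), Finset.filter_erase]
      have hxf : x ∈ B.filter (fun y => y % r = j) := Finset.mem_filter.mpr ⟨hx, hj⟩
      have hnf : x - r * s ∉ (B.filter (fun y => y % r = j)).erase x :=
        fun h => hnx (Finset.mem_of_mem_filter _ (Finset.mem_of_mem_erase h))
      rw [Finset.card_insert_of_notMem hnf, Finset.card_erase_of_mem hxf]
      have : 1 ≤ (B.filter (fun y => y % r = j)).card := Finset.card_pos.mpr ⟨x, hxf⟩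
      omega
    · have hxnot : x ∉ B.filter (fun y => y % r = j) :=
        fun h => hj (Finset.mem_filter.mp h).2
      rw [Finset.filter_insert, if_neg (by rw [hmod]; exact hj), Finset.filter_erase,
        Finset.erase_eq_of_notMem hxnot]
  rw [gZ, gZ, hcs, ← hsd]
  push_cast
  ring

end WtAux

/-- removing an `rs`-hook decreases the `r`-weight by `s`. -/
theorem wt_removeHook (α β : List ℕ) (r s : ℕ) (hα : IsPartition α)
    (hβ : IsPartition β) (hr : 1 ≤ r) (hs : 1 ≤ s)
    (h : RemoveHook (r * s) α β) :
    (wt r β : ℤ) = (wt r α : ℤ) - s := by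
  obtain ⟨m, hmα, hmβ, x, hx, hk, hnx, hEq⟩ := h
  have hr' : 0 < r := hr
  have hs' : 0 < s := hs
  have hcast : ∀ γ : List ℕ, (wt r γ : ℤ) = gZ r (betaSet γ) := by
    intro γ
    have h1 : wt r γ = sdiv r (betaSet γ) - csum r (betaSet γ) := rfl
    rw [h1, Nat.cast_sub (csum_le_sdiv r hr' (betaSet γ))]
    rfl
  calc (wt r β : ℤ) = gZ r (betaSet β) := hcast β
    _ = gZ r (betaSetN β m) := (gZ_betaSetN r hr' β m hmβ).symm
    _ = gZ r (betaSetN α m) - s := by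
        rw [hEq]; exact gZ_hook r s hr' hs' (betaSetN α m) x hx hk hnx
    _ = gZ r (betaSet α) - s := by rw [gZ_betaSetN r hr' α m hmα]
    _ = (wt r α : ℤ) - s := by rw [hcast α]
end

section
/- Let p be a prime, n = d_m p^m + e_m with d_m ≥ 0 and 0 ≤ e_m < p^m, and α a partition of n. If the p^m-weight of α is not equal to d_m for some m ≥ 0, then p divides the degree of the irreducible character χ^α of S_n. -/
open Finset

theorem XQ_sum_distinct (B : Finset ℕ) :
    Nat.choose B.card 2 ≤ ∑ x ∈ B, x ∧
      (∑ x ∈ B, x = Nat.choose B.card 2 → B = Finset.range B.card) := by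
  induction B using Finset.strongInduction with
  | _ B ih =>
  rcases B.eq_empty_or_nonempty with rfl | hne
  · simp
  · have hMmem := B.max'_mem hne
    set M := B.max' hne with hMdef
    have hsub : B.erase M ⊂ B := Finset.erase_ssubset hMmem
    obtain ⟨h1, h2⟩ := ih _ hsub
    have hcarde : (B.erase M).card = B.card - 1 := Finset.card_erase_of_mem hMmem
    have hcpos : 0 < B.card := Finset.card_pos.mpr hne
    obtain ⟨k, hk⟩ : ∃ k, B.card = k + 1 := ⟨B.card - 1, by omega⟩
    have hsumE : ∑ x ∈ B.erase M, x + M = ∑ x ∈ B, x := Finset.sum_erase_add B _ hMmem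
    have hMge : k ≤ M := by
      have hss : B ⊆ Finset.range (M + 1) := fun x hx => Finset.mem_range.mpr
        (Nat.lt_succ_of_le (B.le_max' x hx))
      have := Finset.card_le_card hss
      simp only [Finset.card_range] at this; omega
    have hch : Nat.choose B.card 2 = k + Nat.choose k 2 := by
      rw [hk, Nat.choose_succ_succ]; simp [Nat.choose_one_right]
    have hk' : (B.erase M).card = k := by omega
    rw [hk'] at h1 h2
    constructor
    · omega
    · intro hEq
      have hM : M = k := by omega
      have hS' : ∑ x ∈ B.erase M, x = Nat.choose k 2 := by omega
      have hre := h2 hS'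
      have hB : B = Finset.range (k+1) := by
        rw [← Finset.insert_erase hMmem, hre, hM, ← Finset.range_add_one]
      rw [hk, hB]

theorem XQ_count_lt (S : Finset ℕ) :
    (∑ b ∈ S, ∑ a ∈ S, if a < b then 1 else 0) = S.card.choose 2 := by
  induction S using Finset.strongInduction with
  | _ S ih =>
  rcases S.eq_empty_or_nonempty with rfl | hne
  · simp
  · have hMmem := S.max'_mem hne
    set M := S.max' hne with hMdef
    have hsub : S.erase M ⊂ S := Finset.erase_ssubset hMmem
    have hMe : M ∉ S.erase M := Finset.notMem_erase _ _
    have hS : S = insert M (S.erase M) := (Finset.insert_erase hMmem).symm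
    obtain ⟨k, hk⟩ : ∃ k, S.card = k + 1 := ⟨S.card - 1, by
      have := Finset.card_pos.mpr hne; omega⟩
    have hk' : (S.erase M).card = k := by
      rw [Finset.card_erase_of_mem hMmem]; omega
    have e1 : (∑ a ∈ S, if a < M then 1 else 0) = k := by
      nth_rewrite 1 [hS]
      rw [Finset.sum_insert hMe, if_neg (lt_irrefl M), zero_add]
      have hall : ∀ a ∈ S.erase M, (if a < M then (1:ℕ) else 0) = 1 := fun a ha =>
        if_pos (lt_of_le_of_ne (S.le_max' a (Finset.mem_of_mem_erase ha))
          (Finset.ne_of_mem_erase ha))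
      rw [Finset.sum_congr rfl hall, Finset.sum_const, hk', smul_eq_mul, mul_one]
    have e2 : ∀ b ∈ S.erase M, (∑ a ∈ S, if a < b then 1 else 0)
        = ∑ a ∈ S.erase M, if a < b then 1 else 0 := by
      intro b hb
      nth_rewrite 1 [hS]
      rw [Finset.sum_insert hMe,
        if_neg (not_lt.mpr (S.le_max' b (Finset.mem_of_mem_erase hb))), zero_add]
    calc (∑ b ∈ S, ∑ a ∈ S, if a < b then 1 else 0)
        = (∑ a ∈ S, if a < M then 1 else 0) +
          ∑ b ∈ S.erase M, ∑ a ∈ S, if a < b then 1 else 0 := by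
          nth_rewrite 1 [hS]
          rw [Finset.sum_insert hMe]
      _ = k + Nat.choose k 2 := by
          rw [e1, Finset.sum_congr rfl e2, ih _ hsub, hk']
      _ = S.card.choose 2 := by
          rw [hk, Nat.choose_succ_succ]; simp [Nat.choose_one_right]
open Finset

noncomputable section

/-- The Vandermonde-type product over increasing pairs, in ℚ. -/
def XQ_dq (B : Finset ℕ) : ℚ :=
  ∏ b ∈ B, ∏ a ∈ B, if a < b then (b : ℚ) - (a : ℚ) else 1

def XQ_aF (B : Finset ℕ) : ℚ := ∏ x ∈ B, (Nat.factorial x : ℚ)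

def XQ_nB (B : Finset ℕ) : ℕ := (∑ x ∈ B, x) - Nat.choose B.card 2

theorem XQ_dq_insert {t : ℕ} {E : Finset ℕ} (ht : t ∉ E) :
    XQ_dq (insert t E) = XQ_dq E * ((∏ a ∈ E, if a < t then (t:ℚ) - a else 1) *
      (∏ b ∈ E, if t < b then (b:ℚ) - t else 1)) := by
  unfold XQ_dq
  rw [Finset.prod_insert ht, Finset.prod_insert ht, if_neg (lt_irrefl t)]
  have h2 : ∀ b ∈ E, (∏ a ∈ insert t E, if a < b then (b:ℚ) - a else 1)
      = (if t < b then (b:ℚ) - t else 1) * ∏ a ∈ E, if a < b then (b:ℚ) - a else 1 :=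
    fun b _ => Finset.prod_insert ht
  rw [Finset.prod_congr rfl h2, Finset.prod_mul_distrib]
  ring

theorem XQ_dq_range (L : ℕ) : XQ_dq (Finset.range L) = ∏ i ∈ Finset.range L, (Nat.factorial i : ℚ) := by
  induction L with
  | zero => simp [XQ_dq]
  | succ L ih =>
    rw [Finset.range_add_one, XQ_dq_insert Finset.notMem_range_self, ih,
      Finset.prod_insert Finset.notMem_range_self]
    have h1 : (∏ a ∈ Finset.range L, if a < L then (L:ℚ) - a else 1)
        = ((Nat.factorial L : ℕ) : ℚ) := by
      rw [Finset.prod_congr rfl (fun a ha => if_pos (Finset.mem_range.mp ha))]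
      have : ∀ a ∈ Finset.range L, (L:ℚ) - a = ((L - a : ℕ) : ℚ) := by
        intro a ha
        have := Finset.mem_range.mp ha
        push_cast [Nat.cast_sub (le_of_lt this)]; ring
      rw [Finset.prod_congr rfl this, ← Nat.cast_prod]
      congr 1
      calc ∏ a ∈ Finset.range L, (L - a)
          = ∏ a ∈ Finset.range L, (a + 1) := by
            rw [← Finset.prod_range_reflect]
            exact Finset.prod_congr rfl (fun j hj => by
              have := Finset.mem_range.mp hj; omega)
        _ = Nat.factorial L := Finset.prod_range_add_one_eq_factorial L
    have h2 : (∏ b ∈ Finset.range L, if L < b then (b:ℚ) - L else 1) = 1 :=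
      Finset.prod_eq_one (fun b hb => if_neg (by simpa using le_of_lt (Finset.mem_range.mp hb)))
    rw [h1, h2]
    ring

theorem XQ_dq_ratio {B : Finset ℕ} {x : ℕ} (hxB : x ∈ B) (hx1 : 1 ≤ x) (hnot : x - 1 ∉ B) :
    XQ_dq (insert (x-1) (B.erase x)) * ∏ y ∈ B.erase x, ((x:ℚ) - y)
      = XQ_dq B * ∏ y ∈ B.erase x, ((x:ℚ) - 1 - y) := by
  set E := B.erase x with hE
  have hxE : x ∉ E := Finset.notMem_erase _ _
  have hx1E : x - 1 ∉ E := fun h => hnot (Finset.mem_of_mem_erase h)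
  have hB : B = insert x E := (Finset.insert_erase hxB).symm
  rw [XQ_dq_insert hx1E]
  nth_rewrite 1 [hB]
  rw [XQ_dq_insert hxE]
  have hcast : ((x - 1 : ℕ) : ℚ) = (x:ℚ) - 1 := by
    push_cast [Nat.cast_sub hx1]; ring
  rw [mul_assoc, mul_assoc, mul_assoc, mul_assoc]
  congr 1
  rw [← Finset.prod_mul_distrib, ← Finset.prod_mul_distrib,
    ← Finset.prod_mul_distrib, ← Finset.prod_mul_distrib]
  apply Finset.prod_congr rfl
  intro y hy
  have hyx : y ≠ x := Finset.ne_of_mem_erase hy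
  have hyx1 : y ≠ x - 1 := fun h => hx1E (h ▸ hy)
  rw [hcast]
  rcases lt_trichotomy y (x-1) with h | h | h
  · rw [if_pos h, if_neg (by omega : ¬ (x - 1 < y)), if_pos (by omega : y < x),
      if_neg (by omega : ¬ (x < y))]
    ring
  · omega
  · rw [if_neg (by omega : ¬ (y < x - 1)), if_pos h, if_neg (by omega : ¬ (y < x)),
      if_pos (by omega : x < y)]
    ring

theorem XQ_aF_ratio {B : Finset ℕ} {x : ℕ} (hxB : x ∈ B) (hx1 : 1 ≤ x) (hnot : x - 1 ∉ B) :
    (x : ℚ) * XQ_aF (insert (x-1) (B.erase x)) = XQ_aF B := by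
  have hxE : x ∉ B.erase x := Finset.notMem_erase _ _
  have hx1E : x - 1 ∉ B.erase x := fun h => hnot (Finset.mem_of_mem_erase h)
  unfold XQ_aF
  rw [Finset.prod_insert hx1E, ← Finset.mul_prod_erase B _ hxB, ← mul_assoc]
  congr 1
  obtain ⟨k, rfl⟩ : ∃ k, x = k + 1 := ⟨x - 1, by omega⟩
  simp only [Nat.add_sub_cancel, Nat.factorial_succ]
  push_cast
  ring
open Finset Polynomial

noncomputable section

theorem XQ_prodXsub_monic (B : Finset ℕ) (w : ℕ → ℚ) :
    (∏ y ∈ B, (X - C (w y))).Monic :=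
  monic_prod_of_monic _ _ (fun _ _ => monic_X_sub_C _)

theorem XQ_prodXsub_natDegree (B : Finset ℕ) (w : ℕ → ℚ) :
    (∏ y ∈ B, (X - C (w y))).natDegree = B.card := by
  rw [Polynomial.natDegree_prod]
  · simp [Polynomial.natDegree_X_sub_C]
  · intro i _; exact Polynomial.X_sub_C_ne_zero _

theorem XQ_prodXsub_coeff_top (B : Finset ℕ) (w : ℕ → ℚ) {k : ℕ} (hk : B.card < k) :
    (∏ y ∈ B, (X - C (w y))).coeff k = 0 :=
  Polynomial.coeff_eq_zero_of_natDegree_lt (by rw [XQ_prodXsub_natDegree]; exact hk)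

theorem XQ_prodXsub_coeff_card (B : Finset ℕ) (w : ℕ → ℚ) :
    (∏ y ∈ B, (X - C (w y))).coeff B.card = 1 := by
  have h := (XQ_prodXsub_monic B w)
  have := h.coeff_natDegree
  rwa [XQ_prodXsub_natDegree] at this

theorem XQ_prodXsub_coeff_pred (B : Finset ℕ) (w : ℕ → ℚ) (hB : 0 < B.card) :
    (∏ y ∈ B, (X - C (w y))).coeff (B.card - 1) = -∑ y ∈ B, w y :=
  Polynomial.prod_X_sub_C_coeff_card_pred B w hB

theorem XQ_prodXsub_coeff_sub2 (B : Finset ℕ) (w : ℕ → ℚ) (h2 : 2 ≤ B.card) :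
    (∏ y ∈ B, (X - C (w y))).coeff (B.card - 2)
      = ((∑ y ∈ B, w y)^2 - ∑ y ∈ B, (w y)^2) / 2 := by
  induction B using Finset.induction with
  | empty => simp at h2
  | insert _ _ ha ih =>
    rename_i a s
    rw [Finset.card_insert_of_notMem ha] at h2 ⊢
    rcases Nat.lt_or_ge s.card 2 with hs | hs
    · -- s.card = 1
      have hcard : s.card = 1 := by omega
      obtain ⟨b, rfl⟩ := Finset.card_eq_one.mp hcard
      have hab : a ∉ ({b} : Finset ℕ) := ha
      rw [Finset.prod_insert hab, Finset.prod_singleton, Finset.sum_insert hab,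
        Finset.sum_insert hab, Finset.sum_singleton, Finset.sum_singleton]
      have : (1 + 1 : ℕ) - 2 = 0 := rfl
      rw [Finset.card_singleton]
      norm_num
      ring
    · -- s.card ≥ 2
      obtain ⟨K, hK⟩ : ∃ K, s.card = K + 2 := ⟨s.card - 2, by omega⟩
      have hidx : s.card + 1 - 2 = (s.card - 2) + 1 := by omega
      rw [Finset.prod_insert ha, hidx]
      have hexp : (X - C (w a)) * ∏ y ∈ s, (X - C (w y))
          = X * ∏ y ∈ s, (X - C (w y)) - C (w a) * ∏ y ∈ s, (X - C (w y)) := by ring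
      rw [hexp, Polynomial.coeff_sub, Polynomial.coeff_X_mul, Polynomial.coeff_C_mul]
      have e1 : (∏ y ∈ s, (X - C (w y))).coeff (s.card - 2 + 1)
          = -∑ y ∈ s, w y := by
        have : s.card - 2 + 1 = s.card - 1 := by omega
        rw [this, XQ_prodXsub_coeff_pred s w (by omega)]
      rw [ih hs, e1, Finset.sum_insert ha, Finset.sum_insert ha]
      ring

theorem XQ_prod_basisDivisor_coeff (a : ℚ) (t : Finset ℕ) (v : ℕ → ℚ) :
    (∏ j ∈ t, Lagrange.basisDivisor a (v j)).coeff t.card = ∏ j ∈ t, (a - v j)⁻¹ := by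
  induction t using Finset.induction with
  | empty => simp
  | insert _ _ hj ih =>
    rename_i j t
    rw [Finset.prod_insert hj, Finset.prod_insert hj, Finset.card_insert_of_notMem hj]
    have hdegP : (∏ i ∈ t, Lagrange.basisDivisor a (v i)).natDegree ≤ t.card := by
      refine le_trans (Polynomial.natDegree_prod_le _ _) ?_
      have : ∀ i ∈ t, (Lagrange.basisDivisor a (v i)).natDegree ≤ 1 := by
        intro i _
        unfold Lagrange.basisDivisor
        exact le_trans (Polynomial.natDegree_C_mul_le _ _) (le_of_eq (Polynomial.natDegree_X_sub_C _))
      calc ∑ i ∈ t, (Lagrange.basisDivisor a (v i)).natDegree ≤ ∑ i ∈ t, 1 :=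
            Finset.sum_le_sum this
        _ = t.card := by simp
    have hP1 : (∏ i ∈ t, Lagrange.basisDivisor a (v i)).coeff (t.card + 1) = 0 :=
      Polynomial.coeff_eq_zero_of_natDegree_lt (by omega)
    have hexp : Lagrange.basisDivisor a (v j) * ∏ i ∈ t, Lagrange.basisDivisor a (v i)
        = C (a - v j)⁻¹ * (X * ∏ i ∈ t, Lagrange.basisDivisor a (v i))
          - C (a - v j)⁻¹ * (C (v j) * ∏ i ∈ t, Lagrange.basisDivisor a (v i)) := by
      unfold Lagrange.basisDivisor; ring
    rw [hexp, Polynomial.coeff_sub, Polynomial.coeff_C_mul, Polynomial.coeff_C_mul,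
      Polynomial.coeff_X_mul, Polynomial.coeff_C_mul, hP1, ih]
    ring

theorem XQ_interp_coeff (B : Finset ℕ) (f : ℕ → ℚ) :
    (Lagrange.interpolate B (fun n : ℕ => (n:ℚ)) f).coeff (B.card - 1)
      = ∑ x ∈ B, f x * ∏ y ∈ B.erase x, ((x:ℚ) - (y:ℚ))⁻¹ := by
  rw [Lagrange.interpolate_apply, Polynomial.finset_sum_coeff]
  apply Finset.sum_congr rfl
  intro x hx
  rw [Polynomial.coeff_C_mul]
  congr 1
  have hb : Lagrange.basis B (fun n : ℕ => (n:ℚ)) x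
      = ∏ j ∈ B.erase x, Lagrange.basisDivisor (x:ℚ) ((j:ℚ)) := rfl
  have hcard : (B.erase x).card = B.card - 1 := Finset.card_erase_of_mem hx
  rw [hb, ← hcard, XQ_prod_basisDivisor_coeff]

theorem XQ_star (B : Finset ℕ) :
    ∑ x ∈ B, (x : ℚ) * (∏ y ∈ B.erase x, ((x:ℚ) - 1 - (y:ℚ)))
        / (∏ y ∈ B.erase x, ((x:ℚ) - (y:ℚ)))
      = (∑ x ∈ B, (x : ℚ)) - (Nat.choose B.card 2 : ℚ) := by
  rcases Nat.lt_or_ge B.card 2 with hL | hL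
  · interval_cases h : B.card
    · rw [Finset.card_eq_zero.mp h]; simp
    · obtain ⟨a, rfl⟩ := Finset.card_eq_one.mp h
      simp
  · obtain ⟨K, hK⟩ : ∃ K, B.card = K + 2 := ⟨B.card - 2, by omega⟩
    set w₀ : ℕ → ℚ := fun y => (y:ℚ) with hw₀
    set w₁ : ℕ → ℚ := fun y => (y:ℚ) + 1 with hw₁
    set g : Polynomial ℚ := ∏ y ∈ B, (X - C (w₀ y)) with hg
    set g1 : Polynomial ℚ := ∏ y ∈ B, (X - C (w₁ y)) with hg1
    set L : ℚ := (B.card : ℚ) with hLd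
    set r : Polynomial ℚ := X * (g - g1) - C L * g with hr
    set S : ℚ := ∑ x ∈ B, (x:ℚ) with hS
    set P2 : ℚ := ∑ x ∈ B, (x:ℚ)^2 with hP2
    have hsum0 : ∑ y ∈ B, w₀ y = S := rfl
    have hsum1 : ∑ y ∈ B, w₁ y = S + L := by
      rw [hw₁]; rw [Finset.sum_add_distrib]
      simp [hS, hLd, Finset.sum_const]
    have hsq1 : ∑ y ∈ B, (w₁ y)^2 = P2 + 2*S + L := by
      rw [hw₁]
      have : ∀ y ∈ B, ((y:ℚ) + 1)^2 = (y:ℚ)^2 + 2*(y:ℚ) + 1 := fun y _ => by ring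
      rw [Finset.sum_congr rfl this, Finset.sum_add_distrib, Finset.sum_add_distrib,
        ← Finset.mul_sum]
      simp [hP2, hS, hLd, Finset.sum_const]
    have hgK1 : g.coeff (K+1) = -S := by
      have := XQ_prodXsub_coeff_pred B w₀ (by omega)
      rw [show B.card - 1 = K+1 by omega, hsum0] at this; exact this
    have hg1K1 : g1.coeff (K+1) = -(S + L) := by
      have := XQ_prodXsub_coeff_pred B w₁ (by omega)
      rw [show B.card - 1 = K+1 by omega, hsum1] at this; exact this
    have hgK2 : g.coeff (K+2) = 1 := by
      have := XQ_prodXsub_coeff_card B w₀; rwa [hK] at this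
    have hg1K2 : g1.coeff (K+2) = 1 := by
      have := XQ_prodXsub_coeff_card B w₁; rwa [hK] at this
    have hgtop : ∀ m, K + 2 < m → g.coeff m = 0 := fun m hm =>
      XQ_prodXsub_coeff_top B w₀ (by omega)
    have hg1top : ∀ m, K + 2 < m → g1.coeff m = 0 := fun m hm =>
      XQ_prodXsub_coeff_top B w₁ (by omega)
    have hgK : g.coeff K = (S^2 - P2)/2 := by
      have := XQ_prodXsub_coeff_sub2 B w₀ (by omega)
      rw [show B.card - 2 = K by omega, hsum0] at this
      rw [this, hP2]
    have hg1K : g1.coeff K = ((S+L)^2 - (P2 + 2*S + L))/2 := by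
      have := XQ_prodXsub_coeff_sub2 B w₁ (by omega)
      rw [show B.card - 2 = K by omega, hsum1, hsq1] at this
      exact this
    have hrcoeff : ∀ m', r.coeff (m' + 1)
        = (g - g1).coeff m' - L * g.coeff (m'+1) := by
      intro m'
      rw [hr, Polynomial.coeff_sub, Polynomial.coeff_X_mul, Polynomial.coeff_C_mul]
    have hdeg : r.degree < (B.card : ℕ) := by
      rw [Polynomial.degree_lt_iff_coeff_zero]
      intro m hm
      have hm2 : K + 2 ≤ m := by omega
      obtain ⟨m', rfl⟩ : ∃ m', m = m' + 1 := ⟨m - 1, by omega⟩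
      rw [hrcoeff m', Polynomial.coeff_sub]
      rcases Nat.lt_or_ge m' (K+2) with h1 | h1
      · have : m' = K + 1 := by omega
        rw [this, hgK1, hg1K1, hgK2]
        ring
      · rcases Nat.eq_or_lt_of_le h1 with h2 | h2
        · rw [← h2, hgK2, hg1K2, hgtop (K+2+1) (by omega)]
          ring
        · rw [hgtop m' h2, hg1top m' h2, hgtop (m'+1) (by omega)]
          ring
    have hinj : Set.InjOn (fun n : ℕ => (n:ℚ)) B := fun a _ b _ h => Nat.cast_injective h
    have hgev : ∀ x ∈ B, g.eval (x:ℚ) = 0 := by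
      intro x hx
      rw [hg, Polynomial.eval_prod]
      exact Finset.prod_eq_zero hx (by simp [hw₀])
    have hg1ev : ∀ x ∈ B, g1.eval (x:ℚ) = -∏ y ∈ B.erase x, ((x:ℚ) - 1 - (y:ℚ)) := by
      intro x hx
      rw [hg1, ← Finset.mul_prod_erase B _ hx, Polynomial.eval_mul, Polynomial.eval_prod]
      have e1 : Polynomial.eval (x:ℚ) (X - C (w₁ x)) = -1 := by
        simp [hw₁]
      have e2 : ∀ y ∈ B.erase x, Polynomial.eval (x:ℚ) (X - C (w₁ y))
          = (x:ℚ) - 1 - (y:ℚ) := by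
        intro y _; simp [hw₁]; ring
      rw [e1, Finset.prod_congr rfl e2]
      ring
    have heval : ∀ x ∈ B, r.eval (x:ℚ)
        = (x:ℚ) * ∏ y ∈ B.erase x, ((x:ℚ) - 1 - (y:ℚ)) := by
      intro x hx
      rw [hr]
      simp only [Polynomial.eval_sub, Polynomial.eval_mul, Polynomial.eval_X,
        Polynomial.eval_C, hgev x hx, hg1ev x hx]
      ring
    have hinterp := Lagrange.eq_interpolate (s := B) (v := fun n : ℕ => (n:ℚ))
      (f := r) hinj hdeg
    have hcc := congrArg (fun q => Polynomial.coeff q (B.card - 1)) hinterp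
    rw [XQ_interp_coeff] at hcc
    have hlhs : r.coeff (B.card - 1)
        = (S^2 - P2)/2 - ((S+L)^2 - (P2 + 2*S + L))/2 + L * S := by
      rw [show B.card - 1 = K + 1 by omega, hrcoeff K, Polynomial.coeff_sub,
        hgK, hg1K, hgK1]
      ring
    rw [hlhs] at hcc
    have hsumeq : ∑ x ∈ B, (x : ℚ) * (∏ y ∈ B.erase x, ((x:ℚ) - 1 - (y:ℚ)))
        / (∏ y ∈ B.erase x, ((x:ℚ) - (y:ℚ)))
        = ∑ x ∈ B, (Polynomial.eval ((x:ℕ):ℚ) r) * ∏ y ∈ B.erase x, ((x:ℚ) - (y:ℚ))⁻¹ := by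
      apply Finset.sum_congr rfl
      intro x hx
      rw [heval x hx, div_eq_mul_inv, Finset.prod_inv_distrib]
    rw [hsumeq, ← hcc, Nat.cast_choose_two]
    rw [hS, hLd]
    ring

theorem XQ_key_sum (B : Finset ℕ) :
    ∑ x ∈ B.filter (fun x => 1 ≤ x ∧ x - 1 ∉ B), (x:ℚ) * XQ_dq (insert (x-1) (B.erase x))
      = ((∑ x ∈ B, (x:ℚ)) - (Nat.choose B.card 2 : ℚ)) * XQ_dq B := by
  have hstep : ∀ x ∈ B.filter (fun x => 1 ≤ x ∧ x - 1 ∉ B),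
      (x:ℚ) * XQ_dq (insert (x-1) (B.erase x))
        = XQ_dq B * ((x:ℚ) * (∏ y ∈ B.erase x, ((x:ℚ) - 1 - (y:ℚ)))
            / (∏ y ∈ B.erase x, ((x:ℚ) - (y:ℚ)))) := by
    intro x hx
    rw [Finset.mem_filter] at hx
    obtain ⟨hxB, hx1, hnot⟩ := hx
    have hW : (∏ y ∈ B.erase x, ((x:ℚ) - (y:ℚ))) ≠ 0 := by
      rw [Finset.prod_ne_zero_iff]
      intro y hy
      exact sub_ne_zero.mpr (by exact_mod_cast (Finset.ne_of_mem_erase hy).symm)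
    have hratio : XQ_dq (insert (x-1) (B.erase x))
        = XQ_dq B * (∏ y ∈ B.erase x, ((x:ℚ) - 1 - (y:ℚ)))
            / (∏ y ∈ B.erase x, ((x:ℚ) - (y:ℚ))) := by
      rw [eq_div_iff hW]
      exact XQ_dq_ratio hxB hx1 hnot
    rw [hratio]
    ring
  rw [Finset.sum_congr rfl hstep]
  rw [Finset.sum_filter_of_ne ?hz]
  case hz =>
    intro x hx hne
    by_contra hcon
    apply hne
    push_neg at hcon
    rcases Nat.lt_or_ge x 1 with h0 | h1
    · have : x = 0 := by omega
      subst this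
      simp
    · have hmem : x - 1 ∈ B.erase x := Finset.mem_erase.mpr ⟨by omega, hcon h1⟩
      have : (∏ y ∈ B.erase x, ((x:ℚ) - 1 - (y:ℚ))) = 0 := by
        apply Finset.prod_eq_zero hmem
        have : ((x - 1 : ℕ) : ℚ) = (x:ℚ) - 1 := by
          push_cast [Nat.cast_sub h1]; ring
        rw [this]; ring
      rw [this]
      ring
  rw [← Finset.mul_sum, XQ_star]
  ring

theorem XQ_frob : ∀ (m : ℕ) (B : Finset ℕ), XQ_nB B = m →
    (MN (List.replicate m 1) B : ℚ) * XQ_aF B = (Nat.factorial m : ℚ) * XQ_dq B := by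
  intro m
  induction m with
  | zero =>
    intro B h
    have hs := XQ_sum_distinct B
    have hle : ∑ x ∈ B, x ≤ Nat.choose B.card 2 := by unfold XQ_nB at h; omega
    have hEq : ∑ x ∈ B, x = Nat.choose B.card 2 := le_antisymm hle hs.1
    have hB : B = Finset.range B.card := hs.2 hEq
    rw [List.replicate_zero]
    rw [show MN [] B = 1 from rfl]
    rw [hB, XQ_dq_range]
    simp [XQ_aF]
  | succ m ih =>
    intro B h
    have hsum : ∑ x ∈ B, x = Nat.choose B.card 2 + (m+1) := by
      have := (XQ_sum_distinct B).1; unfold XQ_nB at h; omega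
    rw [List.replicate_succ]
    have hMN : MN (1 :: List.replicate m 1) B
        = ∑ x ∈ B.filter (fun x => 1 ≤ x ∧ x - 1 ∉ B),
            MN (List.replicate m 1) (insert (x-1) (B.erase x)) := by
      rw [MN]
      apply Finset.sum_congr rfl
      intro x hx
      have hx1 : 1 ≤ x := (Finset.mem_filter.mp hx).2.1
      have hempty : B.filter (fun y => x - 1 < y ∧ y < x) = ∅ :=
        Finset.filter_eq_empty_iff.mpr (fun y _ => by omega)
      rw [hempty]
      simp
    rw [hMN]
    push_cast
    rw [Finset.sum_mul]
    have hterm : ∀ x ∈ B.filter (fun x => 1 ≤ x ∧ x - 1 ∉ B),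
        (MN (List.replicate m 1) (insert (x-1) (B.erase x)) : ℚ) * XQ_aF B
          = (Nat.factorial m : ℚ) * ((x:ℚ) * XQ_dq (insert (x-1) (B.erase x))) := by
      intro x hx
      rw [Finset.mem_filter] at hx
      obtain ⟨hxB, hx1, hnot⟩ := hx
      have hx1E : x - 1 ∉ B.erase x := fun hh => hnot (Finset.mem_of_mem_erase hh)
      have hcard : (insert (x-1) (B.erase x)).card = B.card := by
        rw [Finset.card_insert_of_notMem hx1E, Finset.card_erase_of_mem hxB]
        have : 0 < B.card := Finset.card_pos.mpr ⟨x, hxB⟩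
        omega
      have hsumer : (∑ y ∈ B.erase x, y) + x = ∑ y ∈ B, y := Finset.sum_erase_add B _ hxB
      have hsum' : ∑ y ∈ insert (x-1) (B.erase x), y = (x - 1) + ((∑ y ∈ B, y) - x) := by
        rw [Finset.sum_insert hx1E]; omega
      have hBx : XQ_nB (insert (x-1) (B.erase x)) = m := by
        unfold XQ_nB
        rw [hcard, hsum']
        omega
      have hIH := ih _ hBx
      rw [← XQ_aF_ratio hxB hx1 hnot]
      rw [show (MN (List.replicate m 1) (insert (x-1) (B.erase x)) : ℚ)
            * ((x:ℚ) * XQ_aF (insert (x-1) (B.erase x)))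
          = (x:ℚ) * ((MN (List.replicate m 1) (insert (x-1) (B.erase x)) : ℚ)
            * XQ_aF (insert (x-1) (B.erase x))) from by ring, hIH]
      ring
    rw [Finset.sum_congr rfl hterm, ← Finset.mul_sum, XQ_key_sum]
    have hS : (∑ x ∈ B, (x:ℚ)) - (Nat.choose B.card 2 : ℚ) = ((m:ℚ)+1) := by
      have hcast : ((∑ x ∈ B, x : ℕ) : ℚ) = ((Nat.choose B.card 2 + (m+1) : ℕ) : ℚ) := by
        rw [hsum]
      push_cast at hcast
      linarith
    rw [hS, Nat.factorial_succ]
    push_cast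
    ring

theorem XQ_sum_getD (l : List ℕ) : ∑ i ∈ Finset.range l.length, l.getD i 0 = l.sum := by
  induction l with
  | nil => simp
  | cons a t ih =>
    rw [List.length_cons, Finset.sum_range_succ']
    simp only [List.getD_cons_succ, List.getD_cons_zero]
    rw [ih, List.sum_cons, Nat.add_comm]

theorem XQ_beta_mono {α : List ℕ} (hs : α.Pairwise (· ≥ ·)) {i j : ℕ} (hij : i < j)
    (hj : j < α.length) : α.getD j 0 ≤ α.getD i 0 := by
  have hi : i < α.length := lt_trans hij hj
  rw [List.getD_eq_getElem _ _ hj, List.getD_eq_getElem _ _ hi]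
  exact List.pairwise_iff_getElem.mp hs i j hi hj hij

theorem XQ_beta_strict {α : List ℕ} (hs : α.Pairwise (· ≥ ·)) {i j : ℕ} (hij : i < j)
    (hj : j < α.length) :
    α.getD j 0 + (α.length - 1 - j) < α.getD i 0 + (α.length - 1 - i) := by
  have := XQ_beta_mono hs hij hj
  omega

theorem XQ_beta_injOn {α : List ℕ} (hs : α.Pairwise (· ≥ ·)) :
    ∀ i ∈ Finset.range α.length, ∀ j ∈ Finset.range α.length,
      α.getD i 0 + (α.length - 1 - i) = α.getD j 0 + (α.length - 1 - j) → i = j := by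
  intro i hi j hj hEq
  rw [Finset.mem_range] at hi hj
  by_contra hne
  rcases Nat.lt_or_ge i j with h | h
  · have := XQ_beta_strict hs h hj; omega
  · have hji : j < i := by omega
    have := XQ_beta_strict hs hji hi; omega

theorem XQ_beta_card {α : List ℕ} (hs : α.Pairwise (· ≥ ·)) :
    (betaSet α).card = α.length := by
  unfold betaSet betaSetN
  rw [Finset.card_image_of_injOn]
  · exact Finset.card_range _
  · intro i hi j hj hEq
    exact XQ_beta_injOn hs i (by simpa using hi) j (by simpa using hj) hEq

theorem XQ_beta_sum {α : List ℕ} (hs : α.Pairwise (· ≥ ·)) :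
    ∑ x ∈ betaSet α, x = α.sum + Nat.choose α.length 2 := by
  unfold betaSet betaSetN
  rw [Finset.sum_image (XQ_beta_injOn hs), Finset.sum_add_distrib, XQ_sum_getD]
  congr 1
  have h1 : ∑ i ∈ Finset.range α.length, (α.length - 1 - i)
      = ∑ i ∈ Finset.range α.length, i := Finset.sum_range_reflect (fun i => i) _
  have h2 := Finset.sum_range_id_mul_two α.length
  rw [h1, Nat.choose_two_right]
  omega

theorem XQ_beta_bound {α : List ℕ} (hpos : ∀ x ∈ α, 0 < x) :
    ∀ x ∈ betaSet α, x ≤ α.sum := by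
  intro x hx
  unfold betaSet betaSetN at hx
  rw [Finset.mem_image] at hx
  obtain ⟨i, hi, rfl⟩ := hx
  have hiL : i < α.length := Finset.mem_range.mp hi
  rw [← XQ_sum_getD]
  have hsplit : α.getD i 0 + ∑ j ∈ (Finset.range α.length).erase i, α.getD j 0
      = ∑ j ∈ Finset.range α.length, α.getD j 0 :=
    by exact Finset.add_sum_erase (Finset.range α.length) (fun j => α.getD j 0) hi
  have hge : ∀ j ∈ (Finset.range α.length).erase i, 1 ≤ α.getD j 0 := by
    intro j hj
    have hjL : j < α.length := Finset.mem_range.mp (Finset.mem_of_mem_erase hj)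
    rw [List.getD_eq_getElem _ _ hjL]
    exact hpos _ (List.getElem_mem hjL)
  have hcard : ((Finset.range α.length).erase i).card = α.length - 1 := by
    rw [Finset.card_erase_of_mem hi, Finset.card_range]
  have hbig : α.length - 1 ≤ ∑ j ∈ (Finset.range α.length).erase i, α.getD j 0 := by
    calc α.length - 1 = ((Finset.range α.length).erase i).card • 1 := by
          rw [hcard]; simp
      _ ≤ ∑ j ∈ (Finset.range α.length).erase i, α.getD j 0 :=
          Finset.card_nsmul_le_sum _ _ _ hge
  omega

theorem XQ_nB_beta {α : List ℕ} (hp : IsPartition α) : XQ_nB (betaSet α) = α.sum := by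
  unfold XQ_nB
  rw [XQ_beta_card hp.1, XQ_beta_sum hp.1]
  omega

theorem XQ_div_fiber_inj {r j : ℕ} (hr : 0 < r) {B : Finset ℕ} :
    ∀ a ∈ B.filter (fun x => x % r = j), ∀ b ∈ B.filter (fun x => x % r = j),
      a / r = b / r → a = b := by
  intro a ha b hb hab
  have ha' := (Finset.mem_filter.mp ha).2
  have hb' := (Finset.mem_filter.mp hb).2
  have h1 := Nat.div_add_mod a r
  have h2 := Nat.div_add_mod b r
  rw [hab] at h1
  omega

theorem XQ_sub_r_mod {x r : ℕ} (hr : 0 < r) (hrx : r ≤ x) : (x - r) % r = x % r := by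
  conv_rhs => rw [show x = x - r + r by omega]
  rw [Nat.add_mod_right]

theorem XQ_sub_r_div {x r : ℕ} (hr : 0 < r) (hrx : r ≤ x) : (x - r) / r = x / r - 1 := by
  have h := Nat.add_div_right (x - r) hr
  rw [show x - r + r = x by omega] at h
  rw [h]
  exact (Nat.add_sub_cancel _ _).symm

theorem XQ_sum_div_fiberwise {r : ℕ} (hr : 0 < r) (B : Finset ℕ) :
    ∑ j ∈ Finset.range r, ∑ x ∈ B.filter (fun x => x % r = j), x / r
      = ∑ x ∈ B, x / r :=
  Finset.sum_fiberwise_of_maps_to (fun x _ => Finset.mem_range.mpr (Nat.mod_lt x hr)) _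

theorem XQ_fiber_sum_ge {r j : ℕ} (hr : 0 < r) (B : Finset ℕ) :
    ((B.filter (fun x => x % r = j)).card).choose 2
      ≤ ∑ x ∈ B.filter (fun x => x % r = j), x / r := by
  set F := B.filter (fun x => x % r = j) with hF
  have himg : ∑ x ∈ F, x / r = ∑ q ∈ F.image (· / r), q := by
    rw [Finset.sum_image ?inj]
    case inj => exact fun a ha b hb h => XQ_div_fiber_inj hr a ha b hb h
  have hcard : (F.image (· / r)).card = F.card :=
    Finset.card_image_of_injOn (fun a ha b hb h => XQ_div_fiber_inj hr a ha b hb h)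
  rw [himg, ← hcard]
  exact (XQ_sum_distinct _).1

theorem XQ_wt_ge {r : ℕ} (hr : 0 < r) (B : Finset ℕ) :
    ∑ j ∈ Finset.range r, ((B.filter (fun x => x % r = j)).card).choose 2
      ≤ ∑ x ∈ B, x / r := by
  rw [← XQ_sum_div_fiberwise hr B]
  exact Finset.sum_le_sum (fun j _ => XQ_fiber_sum_ge hr B)

theorem XQ_wt_le {r : ℕ} (hr : 0 < r) : ∀ (Q : ℕ) (B : Finset ℕ), (∑ x ∈ B, x / r) = Q →
    ∑ x ∈ B, x / r ≤ XQ_nB B / r +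
      ∑ j ∈ Finset.range r, ((B.filter (fun x => x % r = j)).card).choose 2 := by
  intro Q
  induction Q using Nat.strong_induction_on with
  | _ Q ih =>
  intro B hQ
  by_cases hex : ∃ x ∈ B, r ≤ x ∧ x - r ∉ B
  · obtain ⟨x, hxB, hrx, hnot⟩ := hex
    set B' := insert (x - r) (B.erase x) with hB'
    have hxrE : x - r ∉ B.erase x := fun hh => hnot (Finset.mem_of_mem_erase hh)
    have hcard' : B'.card = B.card := by
      rw [hB', Finset.card_insert_of_notMem hxrE, Finset.card_erase_of_mem hxB]
      have : 0 < B.card := Finset.card_pos.mpr ⟨x, hxB⟩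
      omega
    have hsumer : (∑ y ∈ B.erase x, y) + x = ∑ y ∈ B, y :=
      Finset.sum_erase_add B _ hxB
    have hsum' : ∑ y ∈ B', y = (∑ y ∈ B, y) - r := by
      rw [hB', Finset.sum_insert hxrE]
      omega
    have hdiver : (∑ y ∈ B.erase x, y / r) + x / r = ∑ y ∈ B, y / r :=
      Finset.sum_erase_add B _ hxB
    have hx1 : 1 ≤ x / r := (Nat.one_le_div_iff hr).mpr hrx
    have hQ' : ∑ y ∈ B', y / r = Q - 1 := by
      rw [hB', Finset.sum_insert hxrE, XQ_sub_r_div hr hrx]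
      omega
    have hQpos : 1 ≤ Q := by omega
    have hfib : ∀ j, (B'.filter (fun y => y % r = j)).card
        = (B.filter (fun y => y % r = j)).card := by
      intro j
      rw [hB', Finset.filter_insert, Finset.filter_erase]
      by_cases hj : x % r = j
      · rw [if_pos (by rw [XQ_sub_r_mod hr hrx]; exact hj)]
        have hxf : x ∈ B.filter (fun y => y % r = j) := Finset.mem_filter.mpr ⟨hxB, hj⟩
        have hxrF : x - r ∉ (B.filter (fun y => y % r = j)).erase x := by
          intro hh
          exact hnot (Finset.mem_filter.mp (Finset.mem_of_mem_erase hh)).1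
        rw [Finset.card_insert_of_notMem hxrF, Finset.card_erase_of_mem hxf]
        have : 0 < (B.filter (fun y => y % r = j)).card := Finset.card_pos.mpr ⟨x, hxf⟩
        omega
      · rw [if_neg (by rw [XQ_sub_r_mod hr hrx]; exact hj)]
        have hxnF : x ∉ B.filter (fun y => y % r = j) :=
          fun hh => hj (Finset.mem_filter.mp hh).2
        rw [Finset.erase_eq_of_notMem hxnF]
    have hchsum := (XQ_sum_distinct B').1
    rw [hcard'] at hchsum
    have hxle : x ≤ ∑ y ∈ B, y := by omega
    have hnB' : XQ_nB B' = XQ_nB B - r ∧ r ≤ XQ_nB B := by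
      unfold XQ_nB
      rw [hcard', hsum']
      constructor
      · omega
      · have : Nat.choose B.card 2 ≤ (∑ y ∈ B, y) - r := by
          have := hchsum; rw [hsum'] at this; exact this
        omega
    have hdivn : XQ_nB B / r = XQ_nB B' / r + 1 := by
      obtain ⟨h1, h2⟩ := hnB'
      have : XQ_nB B = XQ_nB B' + r := by omega
      rw [this, Nat.add_div_right _ hr]
    have hIH := ih (Q - 1) (by omega) B' hQ'
    rw [hQ'] at hIH
    have hPeq : ∑ j ∈ Finset.range r, ((B'.filter (fun y => y % r = j)).card).choose 2
        = ∑ j ∈ Finset.range r, ((B.filter (fun y => y % r = j)).card).choose 2 :=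
      Finset.sum_congr rfl (fun j _ => by rw [hfib j])
    rw [hPeq] at hIH
    rw [hQ, hdivn]
    calc Q = (Q - 1) + 1 := by omega
      _ ≤ (XQ_nB B' / r + ∑ j ∈ Finset.range r,
            ((B.filter (fun x => x % r = j)).card).choose 2) + 1 :=
          Nat.add_le_add_right hIH 1
      _ = XQ_nB B' / r + 1 + ∑ j ∈ Finset.range r,
            ((B.filter (fun x => x % r = j)).card).choose 2 := by ring
  · push_neg at hex
    have hQP : ∑ x ∈ B, x / r ≤
        ∑ j ∈ Finset.range r, ((B.filter (fun x => x % r = j)).card).choose 2 := by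
      rw [← XQ_sum_div_fiberwise hr B]
      apply Finset.sum_le_sum
      intro j _
      set F := B.filter (fun x => x % r = j) with hF
      set T := F.image (· / r) with hT
      have himg : ∑ x ∈ F, x / r = ∑ q ∈ T, q := by
        rw [Finset.sum_image (fun a ha b hb h => XQ_div_fiber_inj hr a ha b hb h)]
      have hcard : T.card = F.card :=
        Finset.card_image_of_injOn (fun a ha b hb h => XQ_div_fiber_inj hr a ha b hb h)
      have hstep : ∀ q ∈ T, 1 ≤ q → q - 1 ∈ T := by
        intro q hq h1
        rw [hT, Finset.mem_image] at hq
        obtain ⟨x, hxF, hxq⟩ := hq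
        have hxB : x ∈ B := (Finset.mem_filter.mp hxF).1
        have hxj : x % r = j := (Finset.mem_filter.mp hxF).2
        have hq1 : 1 ≤ x / r := by omega
        have hrx : r ≤ x := (Nat.one_le_div_iff hr).mp hq1
        have hxrB : x - r ∈ B := hex x hxB hrx
        rw [hT, Finset.mem_image]
        refine ⟨x - r, Finset.mem_filter.mpr ⟨hxrB, by rw [XQ_sub_r_mod hr hrx]; exact hxj⟩, ?_⟩
        rw [XQ_sub_r_div hr hrx, hxq]
      have hdown : ∀ q ∈ T, ∀ k, k ≤ q → q - k ∈ T := by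
        intro q hq k
        induction k with
        | zero => intro _; simpa using hq
        | succ k ihk =>
          intro hk
          have h1 : q - k ∈ T := ihk (by omega)
          have h2 := hstep _ h1 (by omega)
          rwa [show q - k - 1 = q - (k+1) by omega] at h2
      have hsubT : T ⊆ Finset.range T.card := by
        intro q hq
        rw [Finset.mem_range]
        have hsub : Finset.range (q + 1) ⊆ T := by
          intro i hi
          rw [Finset.mem_range] at hi
          have := hdown q hq (q - i) (by omega)
          rwa [show q - (q - i) = i by omega] at this
        have := Finset.card_le_card hsub
        rw [Finset.card_range] at this
        omega
      have hTeq : T = Finset.range T.card :=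
        Finset.eq_of_subset_of_card_le hsubT (by rw [Finset.card_range])
      have hgauss : ∑ q ∈ Finset.range T.card, q = (T.card).choose 2 := by
        have := Finset.sum_range_id_mul_two T.card
        rw [Nat.choose_two_right]
        omega
      rw [himg, hTeq, hgauss, hcard]
    exact hQP.trans (Nat.le_add_left _ _)

theorem XQ_val_prod {p : ℕ} [hp : Fact p.Prime] {ι : Type*} {s : Finset ι} {f : ι → ℕ}
    (h : ∀ i ∈ s, f i ≠ 0) :
    padicValNat p (∏ i ∈ s, f i) = ∑ i ∈ s, padicValNat p (f i) := by
  induction s using Finset.cons_induction with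
  | empty => simp
  | cons a s ha ih =>
    rw [Finset.prod_cons, Finset.sum_cons,
      padicValNat.mul (h a (Finset.mem_cons_self a s))
        (Finset.prod_ne_zero_iff.mpr (fun i hi => h i (Finset.mem_cons_of_mem hi))),
      ih (fun i hi => h i (Finset.mem_cons_of_mem hi))]

theorem XQ_val_count {p : ℕ} [hp : Fact p.Prime] {d b0 : ℕ} (hd : 0 < d) (hdb : d < p ^ b0) :
    padicValNat p d = ∑ i ∈ Finset.Ico 1 b0, if p ^ i ∣ d then 1 else 0 := by
  have hp1 : 1 < p := hp.out.one_lt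
  have hvlt : padicValNat p d < b0 := by
    have h1 : p ^ padicValNat p d ∣ d := pow_padicValNat_dvd
    have h2 : p ^ padicValNat p d ≤ d := Nat.le_of_dvd hd h1
    by_contra hcon
    push_neg at hcon
    have : p ^ b0 ≤ p ^ padicValNat p d := Nat.pow_le_pow_right (by omega) hcon
    omega
  rw [← Finset.sum_filter]
  have hfe : (Finset.Ico 1 b0).filter (fun i => p ^ i ∣ d) =
      Finset.Ico 1 (padicValNat p d + 1) := by
    ext i
    rw [Finset.mem_filter, Finset.mem_Ico, Finset.mem_Ico]
    constructor
    · rintro ⟨⟨h1, h2⟩, h3⟩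
      have := (padicValNat_dvd_iff_le (by omega)).mp h3
      omega
    · rintro ⟨h1, h2⟩
      refine ⟨⟨h1, by omega⟩, (padicValNat_dvd_iff_le (by omega)).mpr (by omega)⟩
  rw [hfe, Finset.sum_const, Nat.card_Ico, smul_eq_mul]
  omega

theorem XQ_pairs_count (B : Finset ℕ) (r : ℕ) (hr : 0 < r) :
    (∑ b ∈ B, ∑ a ∈ B, if a < b ∧ r ∣ (b - a) then 1 else 0)
      = ∑ j ∈ Finset.range r, ((B.filter (fun x => x % r = j)).card).choose 2 := by
  have hcong : ∀ b ∈ B, (∑ a ∈ B, if a < b ∧ r ∣ (b - a) then 1 else 0)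
      = ∑ a ∈ B, if a % r = b % r then (if a < b then 1 else 0) else 0 := by
    intro b _
    apply Finset.sum_congr rfl
    intro a _
    by_cases hab : a < b
    · have hiff : (r ∣ (b - a)) ↔ a % r = b % r := by
        rw [← Nat.modEq_iff_dvd' (le_of_lt hab)]
        exact ⟨fun h => h, fun h => h⟩
      by_cases hmod : a % r = b % r
      · rw [if_pos ⟨hab, hiff.mpr hmod⟩, if_pos hmod, if_pos hab]
      · rw [if_neg (fun hh => hmod (hiff.mp hh.2)), if_neg hmod]
    · rw [if_neg (fun hh => hab hh.1)]
      by_cases hmod : a % r = b % r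
      · rw [if_pos hmod, if_neg hab]
      · rw [if_neg hmod]
  rw [Finset.sum_congr rfl hcong]
  rw [← Finset.sum_fiberwise_of_maps_to (fun b (_ : b ∈ B) => Finset.mem_range.mpr (Nat.mod_lt b hr))
    (fun b => ∑ a ∈ B, if a % r = b % r then (if a < b then 1 else 0) else 0)]
  apply Finset.sum_congr rfl
  intro j _
  have hinner : ∀ b ∈ B.filter (fun x => x % r = j),
      (∑ a ∈ B, if a % r = b % r then (if a < b then 1 else 0) else 0)
        = ∑ a ∈ B.filter (fun x => x % r = j), if a < b then 1 else 0 := by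
    intro b hb
    have hbj : b % r = j := (Finset.mem_filter.mp hb).2
    rw [hbj, Finset.sum_filter]
  rw [Finset.sum_congr rfl hinner, XQ_count_lt]

/-- if `w_{p^m}(α) ≠ d_m = ⌊n / p^m⌋` for some `m`, then
`p` divides the degree of `χ^α`. -/
theorem dvd_degree_of_wt_ne (p n : ℕ) (α : List ℕ) (hp : p.Prime)
    (hα : IsPartitionOf n α) (h : ∃ m : ℕ, wt (p ^ m) α ≠ n / p ^ m) :
    (p : ℤ) ∣ charDegree α := by
  haveI : Fact p.Prime := ⟨hp⟩
  obtain ⟨hpart, hsumn⟩ := hα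
  set B := betaSet α with hB
  have hnB : XQ_nB B = n := by rw [hB, XQ_nB_beta hpart, hsumn]
  have hbound : ∀ x ∈ B, x ≤ n := by
    intro x hx; rw [← hsumn]; exact XQ_beta_bound hpart.2 x hx
  have hfrob : (MN (List.replicate n 1) B : ℚ) * XQ_aF B = (Nat.factorial n : ℚ) * XQ_dq B :=
    XQ_frob n B hnB
  have hcd : charDegree α = MN (List.replicate n 1) B := by
    unfold charDegree charVal
    rw [hsumn, ← hB]
  set Dn : ℕ := ∏ b ∈ B, ∏ a ∈ B, if a < b then b - a else 1 with hDn
  set M : ℕ := ∏ x ∈ B, Nat.factorial x with hM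
  have hdqD : XQ_dq B = (Dn : ℚ) := by
    rw [hDn, Nat.cast_prod]
    unfold XQ_dq
    apply Finset.prod_congr rfl
    intro b _
    rw [Nat.cast_prod]
    apply Finset.prod_congr rfl
    intro a _
    by_cases hab : a < b
    · rw [if_pos hab, if_pos hab, Nat.cast_sub (le_of_lt hab)]
    · rw [if_neg hab, if_neg hab, Nat.cast_one]
  have haFM : XQ_aF B = (M : ℚ) := by rw [hM, Nat.cast_prod]; rfl
  set N : ℕ := Nat.factorial n * Dn with hN
  have hQeq : (charDegree α : ℚ) * (M : ℚ) = (N : ℚ) := by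
    rw [hcd, ← haFM, hfrob, hdqD, hN]
    push_cast
    ring
  have hZ : charDegree α * (M : ℤ) = (N : ℤ) := by exact_mod_cast hQeq
  have hDpos : 0 < Dn := by
    rw [hDn]
    apply Finset.prod_pos; intro b _; apply Finset.prod_pos; intro a _
    by_cases hab : a < b
    · rw [if_pos hab]; omega
    · rw [if_neg hab]; omega
  have hMpos : 0 < M := by
    rw [hM]; exact Finset.prod_pos (fun x _ => Nat.factorial_pos x)
  have hNpos : 0 < N := Nat.mul_pos (Nat.factorial_pos n) hDpos
  have hcpos : 0 < charDegree α := by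
    have hprod : (0:ℤ) < charDegree α * (M:ℤ) := by
      rw [hZ]; exact_mod_cast hNpos
    rcases mul_pos_iff.mp hprod with ⟨h1, _⟩ | ⟨_, h2⟩
    · exact h1
    · exact absurd h2 (not_lt.mpr (by positivity))
  set c : ℕ := (charDegree α).toNat with hc
  have hcZ : (c : ℤ) = charDegree α := Int.toNat_of_nonneg (le_of_lt hcpos)
  have hcM : c * M = N := by
    have hcast : ((c * M : ℕ) : ℤ) = ((N : ℕ) : ℤ) := by
      push_cast
      rw [hcZ]
      exact hZ
    exact_mod_cast hcast
  set b0 : ℕ := Nat.log p n + 1 with hb0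
  have hp1 : 1 < p := hp.one_lt
  have hnb0 : n < p ^ b0 := Nat.lt_pow_succ_log_self hp1 n
  have hcne : c ≠ 0 := by
    intro hh
    rw [hh, Nat.zero_mul] at hcM
    omega
  -- valuation of M
  have hvM : padicValNat p M = ∑ i ∈ Finset.Ico 1 b0, ∑ x ∈ B, x / p ^ i := by
    rw [hM, XQ_val_prod (fun x _ => (Nat.factorial_pos x).ne')]
    rw [Finset.sum_congr rfl (fun x hx => padicValNat_factorial
      (show Nat.log p x < b0 by
        have := Nat.log_mono_right (b := p) (hbound x hx)
        omega))]
    rw [Finset.sum_comm]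
  have hvfac : padicValNat p (Nat.factorial n) = ∑ i ∈ Finset.Ico 1 b0, n / p ^ i :=
    padicValNat_factorial (by omega)
  -- valuation of Dn
  have hvD : padicValNat p Dn = ∑ i ∈ Finset.Ico 1 b0,
      ∑ j ∈ Finset.range (p ^ i), ((B.filter (fun x => x % p ^ i = j)).card).choose 2 := by
    have hfac_ne : ∀ b ∈ B, (∏ a ∈ B, if a < b then b - a else 1) ≠ 0 := by
      intro b _
      apply (Finset.prod_pos ?_).ne'
      intro a _
      by_cases hab : a < b
      · rw [if_pos hab]; omega
      · rw [if_neg hab]; omega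
    rw [hDn, XQ_val_prod hfac_ne]
    have hstep1 : ∀ b ∈ B, padicValNat p (∏ a ∈ B, if a < b then b - a else 1)
        = ∑ a ∈ B, ∑ i ∈ Finset.Ico 1 b0, if a < b ∧ p ^ i ∣ (b - a) then 1 else 0 := by
      intro b hb
      rw [XQ_val_prod (fun a _ => by
        by_cases hab : a < b
        · rw [if_pos hab]; omega
        · rw [if_neg hab]; omega)]
      apply Finset.sum_congr rfl
      intro a _
      by_cases hab : a < b
      · rw [if_pos hab, XQ_val_count (p := p) (b0 := b0) (by omega) (by
          have := hbound b hb
          omega)]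
        apply Finset.sum_congr rfl
        intro i _
        by_cases hdvd : p ^ i ∣ (b - a)
        · rw [if_pos hdvd, if_pos ⟨hab, hdvd⟩]
        · rw [if_neg hdvd, if_neg (fun hh => hdvd hh.2)]
      · rw [if_neg hab]
        rw [show padicValNat p 1 = 0 from padicValNat.one]
        rw [Finset.sum_congr rfl (fun i _ => if_neg (fun hh => hab hh.1))]
        simp
    rw [Finset.sum_congr rfl hstep1]
    rw [Finset.sum_congr rfl (fun b _ => Finset.sum_comm), Finset.sum_comm]
    apply Finset.sum_congr rfl
    intro i hi
    have hpi : 0 < p ^ i := Nat.pow_pos (by omega)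
    rw [← XQ_pairs_count B (p ^ i) hpi]
  -- the master valuation identity
  have hval : padicValNat p c + ∑ i ∈ Finset.Ico 1 b0, ∑ x ∈ B, x / p ^ i
      = (∑ i ∈ Finset.Ico 1 b0, n / p ^ i) + ∑ i ∈ Finset.Ico 1 b0,
          ∑ j ∈ Finset.range (p ^ i), ((B.filter (fun x => x % p ^ i = j)).card).choose 2 := by
    rw [← hvM, ← hvfac, ← hvD, ← padicValNat.mul hcne hMpos.ne', hcM, hN,
      padicValNat.mul (Nat.factorial_pos n).ne' hDpos.ne']
  -- locate m
  obtain ⟨m, hm⟩ := h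
  have hwt : ∀ r : ℕ, wt r α = (∑ x ∈ B, x / r) -
      ∑ j ∈ Finset.range r, ((B.filter (fun x => x % r = j)).card).choose 2 := fun r => rfl
  have hm1 : 1 ≤ m := by
    by_contra hcon
    have hm0 : m = 0 := by omega
    apply hm
    rw [hm0, pow_zero, hwt 1, Nat.div_one]
    have e1 : ∑ x ∈ B, x / 1 = ∑ x ∈ B, x :=
      Finset.sum_congr rfl (fun x _ => Nat.div_one x)
    have e2 : ∑ j ∈ Finset.range 1, ((B.filter (fun x => x % 1 = j)).card).choose 2
        = Nat.choose B.card 2 := by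
      rw [Finset.sum_range_one]
      congr 2
      apply Finset.filter_true_of_mem
      intro x _
      exact Nat.mod_one x
    rw [e1, e2]
    have := (XQ_sum_distinct B).1
    unfold XQ_nB at hnB
    omega
  have hm2 : m < b0 := by
    by_contra hcon
    push_neg at hcon
    have hgt : n < p ^ m := by
      calc n < p ^ b0 := hnb0
        _ ≤ p ^ m := Nat.pow_le_pow_right (by omega) hcon
    apply hm
    rw [hwt (p ^ m)]
    have e1 : ∑ x ∈ B, x / p ^ m = 0 := by
      apply Finset.sum_eq_zero
      intro x hx
      exact Nat.div_eq_of_lt (by have := hbound x hx; omega)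
    rw [e1, Nat.div_eq_of_lt hgt]
    omega
  have hmI : m ∈ Finset.Ico 1 b0 := Finset.mem_Ico.mpr ⟨hm1, hm2⟩
  have hple : ∀ i ∈ Finset.Ico 1 b0, ∑ x ∈ B, x / p ^ i
      ≤ n / p ^ i + ∑ j ∈ Finset.range (p ^ i),
          ((B.filter (fun x => x % p ^ i = j)).card).choose 2 := by
    intro i _
    have hpi : 0 < p ^ i := Nat.pow_pos (by omega)
    have := XQ_wt_le hpi (∑ x ∈ B, x / p ^ i) B rfl
    rwa [hnB] at this
  have hpstrict : ∑ x ∈ B, x / p ^ m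
      < n / p ^ m + ∑ j ∈ Finset.range (p ^ m),
          ((B.filter (fun x => x % p ^ m = j)).card).choose 2 := by
    have hle := hple m hmI
    have hge := XQ_wt_ge (show 0 < p ^ m from Nat.pow_pos (by omega)) B
    rcases Nat.lt_or_ge (∑ x ∈ B, x / p ^ m)
      (n / p ^ m + ∑ j ∈ Finset.range (p ^ m),
        ((B.filter (fun x => x % p ^ m = j)).card).choose 2) with hlt | hge2
    · exact hlt
    · exfalso
      apply hm
      rw [hwt (p ^ m)]
      omega
  have hsumlt : ∑ i ∈ Finset.Ico 1 b0, ∑ x ∈ B, x / p ^ i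
      < ∑ i ∈ Finset.Ico 1 b0, (n / p ^ i + ∑ j ∈ Finset.range (p ^ i),
          ((B.filter (fun x => x % p ^ i = j)).card).choose 2) :=
    Finset.sum_lt_sum hple ⟨m, hmI, hpstrict⟩
  rw [Finset.sum_add_distrib] at hsumlt
  have hvpos : 1 ≤ padicValNat p c := by omega
  have hdvd : p ∣ c := dvd_of_one_le_padicValNat hvpos
  rw [← hcZ]
  exact_mod_cast Int.natCast_dvd_natCast.mpr hdvd
end
end
end

section
/- Let p be a prime, t ≥ 0, and write n = d_t p^t + e_t with d_t ≥ 1 and 0 ≤ e_t < p^t. Let α be a partition of n with α_1 > α_2 ≥ 1 such that h_{1,α_2}(α) > d_t p^t, (d_t−1)p^t < h_{1,α_2+1}(α) < d_t p^t, and h_{2,1}(α) < p^t. Then p divides the degree of χ^α. -/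
section AuxProof
open Finset Polynomial

/-- sum of distinct naturals is at least `C(card,2)`. -/
theorem sum_ge_choose (s : Finset ℕ) : s.card.choose 2 ≤ ∑ x ∈ s, x := by
  induction s using Finset.strongInduction with
  | _ s ih =>
    rcases s.eq_empty_or_nonempty with rfl | hs
    · simp
    · have hmax := s.max'_mem hs
      have hcard : s.card ≤ s.max' hs + 1 := by
        have : s ⊆ Finset.range (s.max' hs + 1) := fun x hx =>
          Finset.mem_range.2 (Nat.lt_succ_of_le (s.le_max' x hx))
        simpa using Finset.card_le_card this
      have herase := ih (s.erase (s.max' hs)) (Finset.erase_ssubset hmax)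
      have hce : (s.erase (s.max' hs)).card = s.card - 1 := Finset.card_erase_of_mem hmax
      have hsum : ∑ x ∈ s, x = s.max' hs + ∑ x ∈ s.erase (s.max' hs), x :=
        (Finset.add_sum_erase _ _ hmax).symm
      rw [hsum]
      rw [hce] at herase
      have h1 : s.card.choose 2 ≤ (s.card - 1) + (s.card - 1).choose 2 := by
        rcases Nat.exists_eq_add_of_le (Finset.card_pos.2 hs) with ⟨k, hk⟩
        rw [hk, Nat.add_comm 1 k]
        simp [Nat.choose_succ_succ, Nat.choose_one_right]
      have h2 : s.card - 1 ≤ s.max' hs := by omega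
      omega

theorem eq_range_of_sum_eq_choose (s : Finset ℕ) (h : ∑ x ∈ s, x = s.card.choose 2) :
    s = Finset.range s.card := by
  induction s using Finset.strongInduction with
  | _ s ih =>
    rcases s.eq_empty_or_nonempty with rfl | hs
    · simp
    · have hmax := s.max'_mem hs
      have hcard : s.card ≤ s.max' hs + 1 := by
        have : s ⊆ Finset.range (s.max' hs + 1) := fun x hx =>
          Finset.mem_range.2 (Nat.lt_succ_of_le (s.le_max' x hx))
        simpa using Finset.card_le_card this
      have herase := sum_ge_choose (s.erase (s.max' hs))
      have hce : (s.erase (s.max' hs)).card = s.card - 1 := Finset.card_erase_of_mem hmax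
      have hsum : ∑ x ∈ s, x = s.max' hs + ∑ x ∈ s.erase (s.max' hs), x :=
        (Finset.add_sum_erase _ _ hmax).symm
      rw [hce] at herase
      have hchoose : s.card.choose 2 = (s.card - 1) + (s.card - 1).choose 2 := by
        rcases Nat.exists_eq_add_of_le (Finset.card_pos.2 hs) with ⟨k, hk⟩
        rw [hk, Nat.add_comm 1 k]
        simp [Nat.choose_succ_succ, Nat.choose_one_right, Nat.add_comm]
      have hmaxval : s.max' hs = s.card - 1 := by omega
      have hes : ∑ x ∈ s.erase (s.max' hs), x = (s.card - 1).choose 2 := by omega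
      have := ih (s.erase (s.max' hs)) (Finset.erase_ssubset hmax) (by rw [hce]; exact hes)
      rw [hce] at this
      have hcard1 : 1 ≤ s.card := Finset.card_pos.2 hs
      have : s = insert (s.max' hs) (Finset.range (s.card - 1)) := by
        rw [← this, Finset.insert_erase hmax]
      rw [this, hmaxval]
      ext x
      simp [Finset.mem_range, Finset.mem_insert]
      omega

theorem cnt_lt_cnt (q : ℕ) (B : Finset ℕ) {x x' : ℕ} (hx : x ∈ B) (hlt : x < x')
    (hmod : x % q = x' % q) :
    (B.filter (fun y => y < x ∧ y % q = x % q)).card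
      < (B.filter (fun y => y < x' ∧ y % q = x' % q)).card := by
  have hsub : insert x (B.filter (fun y => y < x ∧ y % q = x % q))
      ⊆ B.filter (fun y => y < x' ∧ y % q = x' % q) := by
    intro y hy
    rcases Finset.mem_insert.1 hy with rfl | hy
    · exact Finset.mem_filter.2 ⟨hx, hlt, hmod⟩
    · rcases Finset.mem_filter.1 hy with ⟨hyB, hylt, hymod⟩
      exact Finset.mem_filter.2 ⟨hyB, hylt.trans hlt, hymod.trans hmod⟩
  have : x ∉ B.filter (fun y => y < x ∧ y % q = x % q) := by
    simp
  calc (B.filter (fun y => y < x ∧ y % q = x % q)).card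
      < (insert x (B.filter (fun y => y < x ∧ y % q = x % q))).card := by
        rw [Finset.card_insert_of_notMem this]; omega
    _ ≤ _ := Finset.card_le_card hsub

theorem core_ineq (q : ℕ) (hq : 0 < q) (B : Finset ℕ) (n : ℕ)
    (hsum : ∑ x ∈ B, x = n + B.card.choose 2) :
    ∑ x ∈ B, x / q ≤ n / q + ∑ x ∈ B, (B.filter (fun y => y < x ∧ q ∣ x - y)).card := by
  classical
  set cnt : ℕ → ℕ := fun x => (B.filter (fun y => y < x ∧ y % q = x % q)).card with hcnt
  have hfilter : ∀ x ∈ B, (B.filter (fun y => y < x ∧ q ∣ x - y)).card = cnt x := by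
    intro x _
    congr 1
    apply Finset.filter_congr
    intro y _
    constructor
    · rintro ⟨h1, h2⟩
      refine ⟨h1, ?_⟩
      have := (Nat.modEq_iff_dvd' h1.le).2 h2
      simpa [Nat.ModEq] using this
    · rintro ⟨h1, h2⟩
      exact ⟨h1, (Nat.modEq_iff_dvd' h1.le).1 (by simpa [Nat.ModEq] using h2)⟩
  set f : ℕ → ℕ := fun x => q * cnt x + x % q with hf
  have hinj : Set.InjOn f B := by
    intro x hx x' hx' hfe
    by_contra hne
    have hmod : x % q = x' % q := by
      have h1 : f x % q = x % q := by simp [hf, Nat.mul_add_mod]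
      have h2 : f x' % q = x' % q := by simp [hf, Nat.mul_add_mod]
      rw [← h1, ← h2, hfe]
    have hfe' : q * cnt x + x % q = q * cnt x' + x' % q := hfe
    have hcnteq : cnt x = cnt x' := by
      have : q * cnt x = q * cnt x' := by omega
      exact Nat.eq_of_mul_eq_mul_left hq this
    rcases Nat.lt_or_ge x x' with h | h
    · have h5 : cnt x < cnt x' := cnt_lt_cnt q B hx h hmod
      omega
    · have hlt : x' < x := by omega
      have h5 : cnt x' < cnt x := cnt_lt_cnt q B hx' hlt hmod.symm
      omega
  have hkey : B.card.choose 2 ≤ ∑ x ∈ B, f x := by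
    have h1 := sum_ge_choose (B.image f)
    rw [Finset.sum_image (fun x hx y hy h => hinj hx hy h),
        Finset.card_image_of_injOn hinj] at h1
    exact h1
  have hsplit : ∀ x : ℕ, x = q * (x / q) + x % q := fun x => (Nat.div_add_mod x q).symm
  have hT : ∑ x ∈ B, x = q * (∑ x ∈ B, x / q) + ∑ x ∈ B, x % q := by
    rw [Finset.mul_sum, ← Finset.sum_add_distrib]
    exact Finset.sum_congr rfl fun x _ => hsplit x
  have hF : ∑ x ∈ B, f x = q * (∑ x ∈ B, cnt x) + ∑ x ∈ B, x % q := by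
    simp only [hf, Finset.mul_sum, Finset.sum_add_distrib]
  rw [Finset.sum_congr rfl hfilter]
  have hEta : B.sum cnt = ∑ x ∈ B, cnt x := rfl
  rcases le_or_gt (∑ x ∈ B, x / q) (∑ x ∈ B, cnt x) with h | h
  · exact le_trans h (Nat.le_add_left _ _)
  · have h4 : (∑ x ∈ B, x / q) * q ≤ n + (∑ x ∈ B, cnt x) * q := by
      rw [Nat.mul_comm, Nat.mul_comm (∑ x ∈ B, cnt x) q]
      omega
    have hqTP : (∑ x ∈ B, x / q - ∑ x ∈ B, cnt x) * q ≤ n := by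
      rw [tsub_mul]
      omega
    have h6 := (Nat.le_div_iff_mul_le hq).2 hqTP
    have h7 : ∑ x ∈ B, x / q ≤ n / q + ∑ x ∈ B, cnt x := by omega
    exact h7

theorem basis_coeff (B : Finset ℕ) (x : ℕ) (hx : x ∈ B) :
    (Lagrange.basis B (fun y : ℕ => (y : ℚ)) x).coeff (B.card - 1)
      = ∏ y ∈ B.erase x, ((x : ℚ) - y)⁻¹ := by
  classical
  have hsplit : Lagrange.basis B (fun y : ℕ => (y : ℚ)) x
      = C (∏ y ∈ B.erase x, ((x : ℚ) - y)⁻¹) * ∏ y ∈ B.erase x, (X - C (y : ℚ)) := by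
    rw [Lagrange.basis]
    unfold Lagrange.basisDivisor
    rw [Finset.prod_mul_distrib, ← map_prod]
  rw [hsplit]
  have hmonic : (∏ y ∈ B.erase x, (X - C (y : ℚ))).Monic :=
    monic_prod_of_monic _ _ fun y _ => monic_X_sub_C _
  have hdeg : (∏ y ∈ B.erase x, (X - C (y : ℚ))).natDegree = B.card - 1 := by
    rw [natDegree_prod_of_monic _ _ fun y _ => monic_X_sub_C _]
    have h1 : ∀ y ∈ B.erase x, (X - C (y:ℚ)).natDegree = 1 := fun y _ => natDegree_X_sub_C _
    rw [Finset.sum_congr rfl h1, Finset.sum_const, smul_eq_mul, mul_one,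
      Finset.card_erase_of_mem hx]
  rw [coeff_C_mul, ← hdeg, hmonic.coeff_natDegree, mul_one]

theorem lagrange_coeff (B : Finset ℕ) (f : ℚ[X]) (hd : f.degree < B.card) :
    f.coeff (B.card - 1) = ∑ x ∈ B, f.eval (x : ℚ) * ∏ y ∈ B.erase x, ((x : ℚ) - y)⁻¹ := by
  classical
  have hinj : Set.InjOn (fun y : ℕ => (y : ℚ)) B := fun a _ b _ h => Nat.cast_injective h
  have heq := Lagrange.eq_interpolate hinj hd
  conv_lhs => rw [heq]
  rw [Lagrange.interpolate_apply, Polynomial.finset_sum_coeff]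
  refine Finset.sum_congr rfl fun x hx => ?_
  rw [coeff_C_mul, basis_coeff B x hx]

noncomputable def hP (B : Finset ℕ) : ℚ[X] :=
  X * ∏ x ∈ B, (X - C ((x : ℚ) + 1)) - (X - C (B.card : ℚ)) * ∏ x ∈ B, (X - C (x : ℚ))

theorem hP_spec (B : Finset ℕ) :
    (hP B).degree < (B.card : WithBot ℕ) ∧
    (hP B).coeff (B.card - 1) = (B.card.choose 2 : ℚ) - ∑ x ∈ B, (x : ℚ) := by
  classical
  induction B using Finset.induction with
  | empty =>
    constructor
    · show (hP ∅).degree < ((0 : ℕ) : WithBot ℕ)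
      have : hP ∅ = 0 := by unfold hP; simp
      rw [this, degree_zero]
      exact WithBot.bot_lt_coe _
    · have : hP ∅ = 0 := by unfold hP; simp
      simp [this]
  | insert a B ha IH =>
    obtain ⟨IH1, IH2⟩ := IH
    have hQmonic : (∏ x ∈ B, (X - C (x : ℚ))).Monic :=
      monic_prod_of_monic _ _ fun y _ => monic_X_sub_C _
    have hQdeg : (∏ x ∈ B, (X - C (x : ℚ))).natDegree = B.card := by
      rw [natDegree_prod_of_monic _ _ fun y _ => monic_X_sub_C _]
      have h1 : ∀ y ∈ B, (X - C (y : ℚ)).natDegree = 1 := fun y _ => natDegree_X_sub_C _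
      rw [Finset.sum_congr rfl h1, Finset.sum_const, smul_eq_mul, mul_one]
    have hid : hP (insert a B) = (X - C ((a : ℚ) + 1)) * hP B
        + C ((B.card : ℚ) - a) * ∏ x ∈ B, (X - C (x : ℚ)) := by
      unfold hP
      rw [Finset.prod_insert ha, Finset.prod_insert ha, Finset.card_insert_of_notMem ha]
      push_cast
      simp only [map_add, map_one, map_sub]
      ring
    have hcard : (insert a B).card = B.card + 1 := Finset.card_insert_of_notMem ha
    have hdeg1 : ((X - C ((a : ℚ) + 1)) * hP B).degree < ((B.card + 1 : ℕ) : WithBot ℕ) := by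
      rw [degree_mul, degree_X_sub_C]
      have : ((B.card + 1 : ℕ) : WithBot ℕ) = 1 + (B.card : WithBot ℕ) := by
        push_cast; rw [add_comm]
      rw [this]
      exact WithBot.add_lt_add_left (by simp) IH1
    have hdeg2 : (C ((B.card : ℚ) - a) * ∏ x ∈ B, (X - C (x : ℚ))).degree
        < ((B.card + 1 : ℕ) : WithBot ℕ) := by
      apply lt_of_le_of_lt (degree_mul_le _ _)
      apply lt_of_le_of_lt (add_le_add degree_C_le (degree_le_natDegree))
      rw [hQdeg, zero_add]
      exact_mod_cast WithBot.coe_lt_coe.2 (Nat.lt_succ_self _)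
    constructor
    · rw [hid, hcard]
      exact lt_of_le_of_lt (degree_add_le _ _) (max_lt hdeg1 hdeg2)
    · rw [hid, hcard]
      have hco : #B + 1 - 1 = #B := by omega
      rw [hco, coeff_add]
      have hz : (hP B).coeff B.card = 0 := coeff_eq_zero_of_degree_lt IH1
      have hQco : (∏ x ∈ B, (X - C (x : ℚ))).coeff B.card = 1 := by
        rw [← hQdeg]; exact hQmonic.coeff_natDegree
      have hsecond : (C ((B.card : ℚ) - a) * ∏ x ∈ B, (X - C (x : ℚ))).coeff B.card
          = (B.card : ℚ) - a := by
        rw [coeff_C_mul, hQco, mul_one]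
      have hXh : (X * hP B).coeff B.card
          = if B.card = 0 then 0 else (hP B).coeff (B.card - 1) := by
        rcases Nat.eq_zero_or_pos B.card with h0 | hpos
        · rw [h0, if_pos rfl, mul_coeff_zero, coeff_X_zero, zero_mul]
        · rw [if_neg (by omega)]
          conv_lhs => rw [(by omega : B.card = (B.card - 1) + 1)]
          rw [coeff_X_mul]
      have hfirst : ((X - C ((a : ℚ) + 1)) * hP B).coeff B.card
          = if B.card = 0 then 0 else (hP B).coeff (B.card - 1) := by
        rw [sub_mul, coeff_sub, coeff_C_mul, hz, mul_zero, sub_zero, hXh]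
      rw [hfirst, hsecond]
      rcases Nat.eq_zero_or_pos B.card with h0 | hpos
      · have hBempty : B = ∅ := Finset.card_eq_zero.1 h0
        subst hBempty
        simp
      · rw [if_neg (by omega), IH2]
        have hch : (B.card + 1).choose 2 = B.card.choose 2 + B.card := by
          rw [Nat.choose_succ_succ]
          simp [Nat.choose_one_right, Nat.add_comm]
        rw [Finset.sum_insert ha, hch]
        push_cast
        ring

noncomputable def Dq (B : Finset ℕ) : ℚ :=
  ∏ x ∈ B, ∏ y ∈ B.filter (· < x), ((x : ℚ) - y)

theorem Dq_pos (B : Finset ℕ) : 0 < Dq B := by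
  apply Finset.prod_pos
  intro x hx
  apply Finset.prod_pos
  intro y hy
  have := (Finset.mem_filter.1 hy).2
  have : (y : ℚ) < x := by exact_mod_cast this
  linarith

theorem Dq_split (B : Finset ℕ) (x : ℕ) (hx : x ∈ B) :
    Dq B = Dq (B.erase x) * (∏ y ∈ (B.erase x).filter (· < x), ((x : ℚ) - y))
      * ∏ z ∈ (B.erase x).filter (x < ·), ((z : ℚ) - x) := by
  classical
  set E := B.erase x with hE
  have hgx : B.filter (· < x) = E.filter (· < x) := by
    ext y
    simp only [hE, Finset.mem_filter, Finset.mem_erase]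
    constructor
    · rintro ⟨h1, h2⟩; exact ⟨⟨by omega, h1⟩, h2⟩
    · rintro ⟨⟨_, h1⟩, h2⟩; exact ⟨h1, h2⟩
  have key : ∀ z ∈ E, (∏ y ∈ B.filter (· < z), ((z : ℚ) - y))
      = (∏ y ∈ E.filter (· < z), ((z : ℚ) - y)) * (if x < z then (z : ℚ) - x else 1) := by
    intro z hz
    obtain ⟨hzx, hzB⟩ := Finset.mem_erase.1 hz
    by_cases hxz : x < z
    · have hmem : x ∉ E.filter (· < z) := by simp [hE]
      have : B.filter (· < z) = insert x (E.filter (· < z)) := by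
        ext y
        simp only [hE, Finset.mem_filter, Finset.mem_erase, Finset.mem_insert]
        constructor
        · rintro ⟨h1, h2⟩
          rcases eq_or_ne y x with rfl | hne
          · exact Or.inl rfl
          · exact Or.inr ⟨⟨hne, h1⟩, h2⟩
        · rintro (rfl | ⟨⟨_, h1⟩, h2⟩)
          · exact ⟨hx, hxz⟩
          · exact ⟨h1, h2⟩
      rw [this, Finset.prod_insert hmem, if_pos hxz]
      ring
    · have : B.filter (· < z) = E.filter (· < z) := by
        ext y
        simp only [hE, Finset.mem_filter, Finset.mem_erase]
        constructor
        · rintro ⟨h1, h2⟩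
          refine ⟨⟨?_, h1⟩, h2⟩
          rintro rfl; exact hxz h2
        · rintro ⟨⟨_, h1⟩, h2⟩; exact ⟨h1, h2⟩
      rw [this, if_neg hxz, mul_one]
  calc Dq B = (∏ y ∈ B.filter (· < x), ((x : ℚ) - y))
        * ∏ z ∈ E, ∏ y ∈ B.filter (· < z), ((z : ℚ) - y) := by
        rw [Dq, ← Finset.mul_prod_erase _ _ hx]
    _ = (∏ y ∈ E.filter (· < x), ((x : ℚ) - y))
        * ∏ z ∈ E, ((∏ y ∈ E.filter (· < z), ((z : ℚ) - y)) * (if x < z then (z : ℚ) - x else 1)) := by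
        rw [hgx, Finset.prod_congr rfl key]
    _ = (∏ y ∈ E.filter (· < x), ((x : ℚ) - y)) * (Dq E *
          ∏ z ∈ E, (if x < z then (z : ℚ) - x else 1)) := by
        rw [Finset.prod_mul_distrib]; rfl
    _ = _ := by
        rw [← Finset.prod_filter]
        ring

theorem per_x (B : Finset ℕ) (x : ℕ) (hx : x ∈ B) (hx1 : 1 ≤ x) (hx2 : x - 1 ∉ B) :
    (∏ y ∈ B, ((x : ℚ) - 1 - y)) * Dq B
      = - Dq (insert (x - 1) (B.erase x)) * ∏ y ∈ B.erase x, ((x : ℚ) - y) := by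
  classical
  set E := B.erase x with hEdef
  set F1 := E.filter (· < x) with hF1
  set F2 := E.filter (x < ·) with hF2
  have hx1E : x - 1 ∉ E := fun h => hx2 (Finset.mem_of_mem_erase h)
  have hxE : x ∉ E := Finset.notMem_erase _ _
  -- erase of the new set
  have hBx : (insert (x - 1) E).erase (x - 1) = E := Finset.erase_insert hx1E
  have hmemBx : x - 1 ∈ insert (x - 1) E := Finset.mem_insert_self _ _
  have hsplitBx := Dq_split (insert (x - 1) E) (x - 1) hmemBx
  rw [hBx] at hsplitBx
  -- identify filters
  have hfilt1 : E.filter (· < x - 1) = F1 := by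
    rw [hF1]
    apply Finset.filter_congr
    intro y hy
    obtain ⟨hyx, hyB⟩ := Finset.mem_erase.1 hy
    have hyne : y ≠ x - 1 := by rintro rfl; exact hx2 hyB
    omega
  have hfilt2 : E.filter (x - 1 < ·) = F2 := by
    rw [hF2]
    apply Finset.filter_congr
    intro y hy
    obtain ⟨hyx, hyB⟩ := Finset.mem_erase.1 hy
    have hyne : y ≠ x - 1 := by rintro rfl; exact hx2 hyB
    omega
  rw [hfilt1, hfilt2] at hsplitBx
  -- cast of x - 1
  have hcast : ((x - 1 : ℕ) : ℚ) = (x : ℚ) - 1 := by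
    push_cast [hx1]; ring
  -- rewrite the products in hsplitBx using the cast
  have hprod1 : ∀ y ∈ F1, ((x - 1 : ℕ) : ℚ) - y = (x : ℚ) - 1 - y := by
    intro y _; rw [hcast]
  have hprod2 : ∀ z ∈ F2, (z : ℚ) - ((x - 1 : ℕ) : ℚ) = (z : ℚ) - x + 1 := by
    intro z _; rw [hcast]; ring
  rw [Finset.prod_congr rfl hprod1, Finset.prod_congr rfl hprod2] at hsplitBx
  -- split Dq B
  have hsplitB := Dq_split B x hx
  rw [← hEdef, ← hF1, ← hF2] at hsplitB
  -- split the full product over B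
  have hBprod : (∏ y ∈ B, ((x : ℚ) - 1 - y))
      = -1 * (∏ y ∈ F1, ((x : ℚ) - 1 - y)) * ∏ z ∈ F2, ((x : ℚ) - 1 - z) := by
    rw [← Finset.mul_prod_erase _ _ hx, ← hEdef]
    have : ∏ y ∈ E, ((x : ℚ) - 1 - y)
        = (∏ y ∈ F1, ((x : ℚ) - 1 - y)) * ∏ z ∈ F2, ((x : ℚ) - 1 - z) := by
      rw [hF1, hF2, ← Finset.prod_filter_mul_prod_filter_not E (· < x)]
      congr 1
      apply Finset.prod_congr _ (fun _ _ => rfl)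
      apply Finset.filter_congr
      intro y hy
      obtain ⟨hyx, _⟩ := Finset.mem_erase.1 hy
      omega
    rw [this]
    ring
  -- split ∏ over E of (x - y)
  have hEprod : (∏ y ∈ E, ((x : ℚ) - y))
      = (∏ y ∈ F1, ((x : ℚ) - y)) * ∏ z ∈ F2, ((x : ℚ) - z) := by
    rw [hF1, hF2, ← Finset.prod_filter_mul_prod_filter_not E (· < x)]
    congr 1
    apply Finset.prod_congr _ (fun _ _ => rfl)
    apply Finset.filter_congr
    intro y hy
    obtain ⟨hyx, _⟩ := Finset.mem_erase.1 hy
    omega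
  -- the F2 factor identity
  have hF2id : (∏ z ∈ F2, ((x : ℚ) - 1 - z)) * (∏ z ∈ F2, ((z : ℚ) - x))
      = (∏ z ∈ F2, ((z : ℚ) - x + 1)) * (∏ z ∈ F2, ((x : ℚ) - z)) := by
    rw [← Finset.prod_mul_distrib, ← Finset.prod_mul_distrib]
    exact Finset.prod_congr rfl fun z _ => by ring
  rw [hBprod, hsplitB, hsplitBx, hEprod]
  linear_combination (-(Dq E) * (∏ y ∈ F1, ((x : ℚ) - 1 - y)) * (∏ y ∈ F1, ((x : ℚ) - y))) * hF2id


theorem dagger (B : Finset ℕ) :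
    ∑ x ∈ B.filter (fun x => 1 ≤ x ∧ x - 1 ∉ B), (x : ℚ) * Dq (insert (x - 1) (B.erase x))
      = ((∑ x ∈ B, (x : ℚ)) - (B.card.choose 2 : ℚ)) * Dq B := by
  classical
  have h0 := lagrange_coeff B (hP B) (hP_spec B).1
  rw [(hP_spec B).2] at h0
  -- eval of hP at a node
  have heval : ∀ x ∈ B, (hP B).eval (x : ℚ) = (x : ℚ) * ∏ y ∈ B, ((x : ℚ) - 1 - y) := by
    intro x hx
    unfold hP
    rw [eval_sub, eval_mul, eval_mul, eval_X, eval_prod, eval_prod]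
    have hzero : (∏ y ∈ B, ((X - C (y : ℚ)).eval (x : ℚ))) = 0 := by
      apply Finset.prod_eq_zero hx
      simp
    rw [hzero, mul_zero, sub_zero]
    congr 1
    apply Finset.prod_congr rfl
    intro y _
    rw [eval_sub, eval_X, eval_C]
    ring
  -- multiply h0 by Dq B
  have h1 : ∑ x ∈ B, ((hP B).eval (x : ℚ) * ∏ y ∈ B.erase x, ((x : ℚ) - y)⁻¹) * Dq B
      = ((B.card.choose 2 : ℚ) - ∑ x ∈ B, (x : ℚ)) * Dq B := by
    rw [← Finset.sum_mul, ← h0]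
  -- per-term evaluation
  have h2 : ∀ x ∈ B, ((hP B).eval (x : ℚ) * ∏ y ∈ B.erase x, ((x : ℚ) - y)⁻¹) * Dq B
      = if 1 ≤ x ∧ x - 1 ∉ B then -((x : ℚ) * Dq (insert (x - 1) (B.erase x))) else 0 := by
    intro x hx
    rw [heval x hx]
    by_cases hS : 1 ≤ x ∧ x - 1 ∉ B
    · obtain ⟨hx1, hx2⟩ := hS
      rw [if_pos ⟨hx1, hx2⟩]
      have hprodne : (∏ y ∈ B.erase x, ((x : ℚ) - y)) ≠ 0 := by
        apply Finset.prod_ne_zero_iff.2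
        intro y hy
        obtain ⟨hyx, _⟩ := Finset.mem_erase.1 hy
        have : (y : ℚ) ≠ (x : ℚ) := by exact_mod_cast hyx
        intro h
        apply this
        linarith
      have hinv : ∏ y ∈ B.erase x, ((x : ℚ) - y)⁻¹ = (∏ y ∈ B.erase x, ((x : ℚ) - y))⁻¹ := by
        rw [← Finset.prod_inv_distrib]
      have hper := per_x B x hx hx1 hx2
      rw [hinv]
      have hq := mul_inv_cancel₀ hprodne
      linear_combination (x : ℚ) * (∏ y ∈ B.erase x, ((x : ℚ) - y))⁻¹ * hper + (-(x : ℚ) * Dq (insert (x - 1) (B.erase x))) * hq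
    · rw [if_neg hS]
      rcases Nat.lt_or_ge x 1 with h0' | h1'
      · have : x = 0 := by omega
        subst this
        simp
      · have hx2 : x - 1 ∈ B := by
          by_contra hc
          exact hS ⟨h1', hc⟩
        have : (∏ y ∈ B, ((x : ℚ) - 1 - y)) = 0 := by
          apply Finset.prod_eq_zero hx2
          have : ((x - 1 : ℕ) : ℚ) = (x : ℚ) - 1 := by push_cast [h1']; ring
          rw [this]; ring
        rw [this]
        ring
  rw [Finset.sum_congr rfl h2] at h1
  rw [Finset.sum_ite, Finset.sum_const_zero, add_zero] at h1
  rw [Finset.sum_neg_distrib] at h1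
  linarith [h1]

theorem prod_range_sub_factorial (x : ℕ) : ∏ y ∈ Finset.range x, ((x : ℚ) - y) = x.factorial := by
  have hN : ∏ y ∈ Finset.range x, (x - y) = x.factorial := by
    rw [← Finset.prod_range_reflect]
    have : ∀ j ∈ Finset.range x, x - (x - 1 - j) = j + 1 := by
      intro j hj
      have := Finset.mem_range.1 hj
      omega
    rw [Finset.prod_congr rfl this]
    exact Finset.prod_range_add_one_eq_factorial x
  calc ∏ y ∈ Finset.range x, ((x : ℚ) - y) = ((∏ y ∈ Finset.range x, (x - y) : ℕ) : ℚ) := by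
        rw [Nat.cast_prod]
        apply Finset.prod_congr rfl
        intro y hy
        have := Finset.mem_range.1 hy
        rw [Nat.cast_sub (by omega)]
    _ = x.factorial := by rw [hN]

theorem Dq_range (m : ℕ) : Dq (Finset.range m) = ∏ x ∈ Finset.range m, (x.factorial : ℚ) := by
  unfold Dq
  apply Finset.prod_congr rfl
  intro x hx
  have hfilt : (Finset.range m).filter (· < x) = Finset.range x := by
    ext y
    simp only [Finset.mem_filter, Finset.mem_range]
    have := Finset.mem_range.1 hx
    omega
  rw [hfilt, prod_range_sub_factorial]

theorem MN_hook : ∀ (n : ℕ) (B : Finset ℕ), (∑ x ∈ B, x) = n + B.card.choose 2 →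
    (MN (List.replicate n 1) B : ℚ) * ∏ x ∈ B, (x.factorial : ℚ)
      = (n.factorial : ℚ) * Dq B := by
  intro n
  induction n with
  | zero =>
    intro B hB
    have hrange := eq_range_of_sum_eq_choose B (by omega)
    rw [List.replicate_zero]
    show ((MN [] B : ℤ) : ℚ) * _ = _
    rw [show MN [] B = 1 from rfl]
    rw [hrange, Dq_range]
    simp
  | succ n IH =>
    intro B hB
    have hne : B.Nonempty := by
      rcases B.eq_empty_or_nonempty with rfl | h
      · simp at hB
      · exact h
    rw [List.replicate_succ]
    have hMN : MN (1 :: List.replicate n 1) B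
        = ∑ x ∈ B.filter (fun x => 1 ≤ x ∧ x - 1 ∉ B),
            MN (List.replicate n 1) (insert (x - 1) (B.erase x)) := by
      show (∑ x ∈ B.filter (fun x => 1 ≤ x ∧ x - 1 ∉ B),
          (-1 : ℤ) ^ (B.filter (fun y => x - 1 < y ∧ y < x)).card
            * MN (List.replicate n 1) (insert (x - 1) (B.erase x))) = _
      apply Finset.sum_congr rfl
      intro x hx
      obtain ⟨hxB, hx1, hx2⟩ := Finset.mem_filter.1 hx |>.imp id id
      have hempty : B.filter (fun y => x - 1 < y ∧ y < x) = ∅ := by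
        apply Finset.filter_eq_empty_iff.2
        intro y _
        obtain ⟨h1, h2⟩ := Finset.mem_filter.1 hx |>.2
        omega
      rw [hempty]
      simp
    rw [hMN]
    push_cast
    rw [Finset.sum_mul]
    have hterm : ∀ x ∈ B.filter (fun x => 1 ≤ x ∧ x - 1 ∉ B),
        ((MN (List.replicate n 1) (insert (x - 1) (B.erase x)) : ℤ) : ℚ)
          * ∏ y ∈ B, (y.factorial : ℚ)
        = (n.factorial : ℚ) * ((x : ℚ) * Dq (insert (x - 1) (B.erase x))) := by
      intro x hx
      obtain ⟨hxB, hx1, hx2⟩ := Finset.mem_filter.1 hx |>.imp id id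
      have hx1E : x - 1 ∉ B.erase x := fun h => hx2 (Finset.mem_of_mem_erase h)
      have herase : ∑ y ∈ B.erase x, y + x = ∑ y ∈ B, y := Finset.sum_erase_add B _ hxB
      have hcard : (insert (x - 1) (B.erase x)).card = B.card := by
        rw [Finset.card_insert_of_notMem hx1E, Finset.card_erase_of_mem hxB]
        have : 1 ≤ B.card := Finset.card_pos.2 ⟨x, hxB⟩
        omega
      have hsumBx : ∑ y ∈ insert (x - 1) (B.erase x), y
          = n + (insert (x - 1) (B.erase x)).card.choose 2 := by
        rw [Finset.sum_insert hx1E, hcard]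
        omega
      have hIH := IH _ hsumBx
      -- factorial product relation: ∏_B y! = x * ∏_Bx y!
      have hfact : ∏ y ∈ B, (y.factorial : ℚ)
          = (x : ℚ) * ∏ y ∈ insert (x - 1) (B.erase x), (y.factorial : ℚ) := by
        rw [Finset.prod_insert hx1E, ← Finset.mul_prod_erase _ _ hxB]
        have : (x.factorial : ℚ) = (x : ℚ) * ((x - 1).factorial : ℚ) := by
          have hx' : x = (x - 1) + 1 := by omega
          rw [hx', Nat.factorial_succ]
          push_cast
          ring
        rw [this]
        ring
      rw [hfact, ← mul_assoc, mul_comm _ (x : ℚ), mul_assoc, hIH]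
      ring
    rw [Finset.sum_congr rfl hterm, ← Finset.mul_sum, dagger]
    have hcast : (∑ x ∈ B, (x : ℚ)) - ((B.card.choose 2 : ℕ) : ℚ) = (n : ℚ) + 1 := by
      have : ((∑ x ∈ B, x : ℕ) : ℚ) = ((n + 1 + B.card.choose 2 : ℕ) : ℚ) := by
        rw [hB]
      push_cast at this
      linarith
    rw [hcast, Nat.factorial_succ]
    push_cast
    ring

def DN (B : Finset ℕ) : ℕ :=
  ∏ x ∈ B, ∏ y ∈ B.filter (· < x), (x - y)

theorem DN_cast (B : Finset ℕ) : ((DN B : ℕ) : ℚ) = Dq B := by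
  unfold DN Dq
  push_cast
  apply Finset.prod_congr rfl
  intro x hx
  apply Finset.prod_congr rfl
  intro y hy
  have := (Finset.mem_filter.1 hy).2
  rw [Nat.cast_sub (by omega)]

theorem DN_pos (B : Finset ℕ) : 0 < DN B := by
  apply Finset.prod_pos
  intro x hx
  apply Finset.prod_pos
  intro y hy
  have := (Finset.mem_filter.1 hy).2
  omega

/-- The integer form of the hook length formula. -/
theorem MN_eq_nat (n : ℕ) (B : Finset ℕ) (hsum : ∑ x ∈ B, x = n + B.card.choose 2) :
    ∃ F : ℕ, MN (List.replicate n 1) B = (F : ℤ) ∧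
      F * ∏ x ∈ B, x.factorial = n.factorial * DN B := by
  have h := MN_hook n B hsum
  rw [← DN_cast] at h
  have hprodpos : 0 < ∏ x ∈ B, x.factorial := Finset.prod_pos fun x _ => Nat.factorial_pos x
  have hq : (MN (List.replicate n 1) B : ℚ) * ((∏ x ∈ B, x.factorial : ℕ) : ℚ)
      = ((n.factorial * DN B : ℕ) : ℚ) := by
    push_cast
    push_cast at h
    linarith [h]
  have hz : MN (List.replicate n 1) B * ((∏ x ∈ B, x.factorial : ℕ) : ℤ)
      = ((n.factorial * DN B : ℕ) : ℤ) := by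
    have := hq
    have hcast : (((MN (List.replicate n 1) B * ((∏ x ∈ B, x.factorial : ℕ) : ℤ)) : ℤ) : ℚ)
        = (((n.factorial * DN B : ℕ) : ℤ) : ℚ) := by
      push_cast
      push_cast at hq
      linarith [hq]
    exact_mod_cast hcast
  have hMNpos : 0 < MN (List.replicate n 1) B := by
    rcases lt_trichotomy (MN (List.replicate n 1) B) 0 with h' | h' | h'
    · exfalso
      have hr : (0 : ℤ) < ((n.factorial * DN B : ℕ) : ℤ) := by
        have := Nat.mul_pos (Nat.factorial_pos n) (DN_pos B)
        exact_mod_cast this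
      nlinarith [hz, hr, (show (0:ℤ) < ((∏ x ∈ B, x.factorial : ℕ) : ℤ) by exact_mod_cast hprodpos)]
    · exfalso
      rw [h', zero_mul] at hz
      have := Nat.mul_pos (Nat.factorial_pos n) (DN_pos B)
      omega
    · exact h'
  refine ⟨(MN (List.replicate n 1) B).toNat, (Int.toNat_of_nonneg hMNpos.le).symm, ?_⟩
  have : (((MN (List.replicate n 1) B).toNat * ∏ x ∈ B, x.factorial : ℕ) : ℤ)
      = ((n.factorial * DN B : ℕ) : ℤ) := by
    push_cast
    rw [Int.toNat_of_nonneg hMNpos.le]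
    push_cast at hz
    linarith [hz]
  exact_mod_cast this

theorem val_card (p : ℕ) (hp : p.Prime) (z K : ℕ) (hz : 0 < z) (hzK : z < p ^ K) :
    z.factorization p = ((Finset.Ico 1 K).filter (fun k => p ^ k ∣ z)).card := by
  have hdvd : p ^ z.factorization p ∣ z := Nat.ordProj_dvd z p
  have hlt : z.factorization p < K := by
    by_contra hc
    push_neg at hc
    have h1 : p ^ K ≤ p ^ z.factorization p := Nat.pow_le_pow_right hp.pos hc
    have h2 : p ^ z.factorization p ≤ z := Nat.le_of_dvd hz hdvd
    omega
  have hfilt : (Finset.Ico 1 K).filter (fun k => p ^ k ∣ z)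
      = Finset.Ico 1 (z.factorization p + 1) := by
    ext k
    simp only [Finset.mem_filter, Finset.mem_Ico]
    constructor
    · rintro ⟨⟨h1, h2⟩, h3⟩
      have := (Nat.Prime.pow_dvd_iff_le_factorization hp hz.ne').1 h3
      omega
    · rintro ⟨h1, h2⟩
      have h3 : k ≤ z.factorization p := by omega
      exact ⟨⟨h1, by omega⟩, (Nat.Prime.pow_dvd_iff_le_factorization hp hz.ne').2 h3⟩
  rw [hfilt, Nat.card_Ico]
  omega

theorem MN_val (p : ℕ) (hp : p.Prime) (n : ℕ) (hn : 0 < n) (B : Finset ℕ) (F : ℕ)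
    (hF : F * ∏ x ∈ B, x.factorial = n.factorial * DN B)
    (hsum : ∑ x ∈ B, x = n + B.card.choose 2)
    (helem : ∀ x ∈ B, x ≤ n)
    (t : ℕ) (ht1 : 1 ≤ t) (hpt : p ^ t ≤ n)
    (x0 b1 : ℕ) (hx0 : x0 ∈ B) (hb1 : b1 ∈ B) (hlt : x0 < b1) (hdvd : p ^ t ∣ b1 - x0)
    (hsumdiv : ∑ x ∈ B, x / p ^ t = n / p ^ t) :
    p ∣ F := by
  classical
  haveI : Fact p.Prime := ⟨hp⟩
  set K := Nat.log p n + 1 with hK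
  have hpK : n < p ^ K := Nat.lt_pow_succ_log_self hp.one_lt n
  have hDNpos : 0 < DN B := by
    apply Finset.prod_pos; intro x hx; apply Finset.prod_pos; intro y hy
    have := (Finset.mem_filter.1 hy).2; omega
  have hF0 : F ≠ 0 := by
    intro h
    rw [h, zero_mul] at hF
    have := Nat.mul_pos (Nat.factorial_pos n) hDNpos
    omega
  -- factorization of both sides of hF at prime p
  have hfacProd : (∏ x ∈ B, x.factorial).factorization p = ∑ x ∈ B, (x.factorial).factorization p := by
    rw [Nat.factorization_prod (fun x _ => (Nat.factorial_pos x).ne')]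
    simp
  have hfacDN : (DN B).factorization p
      = ∑ x ∈ B, ∑ y ∈ B.filter (· < x), (x - y).factorization p := by
    unfold DN
    rw [Nat.factorization_prod (fun x _ => (Finset.prod_pos (fun y hy => by
      have := (Finset.mem_filter.1 hy).2; omega)).ne')]
    rw [Finsupp.finset_sum_apply]
    apply Finset.sum_congr rfl
    intro x hx
    rw [Nat.factorization_prod (fun y hy => by
      have := (Finset.mem_filter.1 hy).2; omega)]
    rw [Finsupp.finset_sum_apply]
  have hmain : F.factorization p + ∑ x ∈ B, (x.factorial).factorization p
      = (n.factorial).factorization p + (DN B).factorization p := by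
    have h1 := congrArg (fun m => m.factorization p) hF
    rw [Nat.factorization_mul hF0 (Finset.prod_pos (fun x _ => Nat.factorial_pos x)).ne',
        Nat.factorization_mul (Nat.factorial_pos n).ne' hDNpos.ne'] at h1
    simp only [Finsupp.add_apply] at h1
    rw [← hfacProd]
    omega
  -- Legendre
  have hlegendre : ∀ m : ℕ, m ≤ n →
      (m.factorial).factorization p = ∑ k ∈ Finset.Ico 1 K, m / p ^ k := by
    intro m hm
    rw [Nat.factorization_def _ hp]
    exact padicValNat_factorial (by
      calc Nat.log p m ≤ Nat.log p n := Nat.log_mono_right hm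
        _ < K := by omega)
  -- valuation of differences
  have hdiff : ∀ x ∈ B, ∀ y ∈ B.filter (· < x),
      (x - y).factorization p = ∑ k ∈ Finset.Ico 1 K, if p ^ k ∣ x - y then 1 else 0 := by
    intro x hx y hy
    have hyx := (Finset.mem_filter.1 hy).2
    rw [val_card p hp _ K (by omega) (by
      have := helem x hx
      omega), Finset.card_filter]
  -- rewrite everything as sums over Ico 1 K
  have hDNval : (DN B).factorization p
      = ∑ k ∈ Finset.Ico 1 K, ∑ x ∈ B, ∑ y ∈ B.filter (· < x), (if p ^ k ∣ x - y then 1 else 0) := by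
    rw [hfacDN]
    rw [Finset.sum_comm]
    apply Finset.sum_congr rfl
    intro x hx
    rw [Finset.sum_comm]
    apply Finset.sum_congr rfl
    intro y hy
    exact hdiff x hx y hy
  have hsumfac : ∑ x ∈ B, (x.factorial).factorization p
      = ∑ k ∈ Finset.Ico 1 K, ∑ x ∈ B, x / p ^ k := by
    rw [Finset.sum_comm]
    apply Finset.sum_congr rfl
    intro x hx
    exact hlegendre x (helem x hx)
  -- per-k inequality
  have hperk : ∀ k ∈ Finset.Ico 1 K,
      ∑ x ∈ B, x / p ^ k ≤ n / p ^ k + ∑ x ∈ B, ∑ y ∈ B.filter (· < x), (if p ^ k ∣ x - y then 1 else 0) := by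
    intro k _
    have := core_ineq (p ^ k) (pow_pos hp.pos k) B n hsum
    apply le_trans this
    apply Nat.add_le_add_left
    apply le_of_eq
    apply Finset.sum_congr rfl
    intro x hx
    rw [← Finset.filter_filter, Finset.card_filter]
  -- strictness at t
  have htK : t ∈ Finset.Ico 1 K := by
    rw [Finset.mem_Ico]
    refine ⟨ht1, ?_⟩
    have : t ≤ Nat.log p n := Nat.le_log_of_pow_le hp.one_lt hpt
    omega
  have hstrict : ∑ x ∈ B, x / p ^ t
      < n / p ^ t + ∑ x ∈ B, ∑ y ∈ B.filter (· < x), (if p ^ t ∣ x - y then 1 else 0) := by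
    rw [hsumdiv]
    have h1 : 1 ≤ ∑ x ∈ B, ∑ y ∈ B.filter (· < x), (if p ^ t ∣ x - y then 1 else 0) := by
      have hterm : 1 ≤ ∑ y ∈ B.filter (· < b1), (if p ^ t ∣ b1 - y then 1 else 0) := by
        have hx0mem : x0 ∈ B.filter (· < b1) := Finset.mem_filter.2 ⟨hx0, hlt⟩
        have h5 := Finset.single_le_sum (f := fun y => if p ^ t ∣ b1 - y then (1:ℕ) else 0)
          (fun y _ => Nat.zero_le _) hx0mem
        simpa [hdvd] using h5
      calc 1 ≤ ∑ y ∈ B.filter (· < b1), (if p ^ t ∣ b1 - y then 1 else 0) := hterm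
        _ ≤ _ := Finset.single_le_sum (f := fun x => ∑ y ∈ B.filter (· < x), (if p ^ t ∣ x - y then 1 else 0))
            (fun x _ => Nat.zero_le _) hb1
    omega
  -- combine
  have hsumlt : ∑ k ∈ Finset.Ico 1 K, ∑ x ∈ B, x / p ^ k
      < ∑ k ∈ Finset.Ico 1 K, (n / p ^ k + ∑ x ∈ B, ∑ y ∈ B.filter (· < x), (if p ^ k ∣ x - y then 1 else 0)) := by
    apply Finset.sum_lt_sum hperk ⟨t, htK, hstrict⟩
  rw [Finset.sum_add_distrib] at hsumlt
  have hval1 : 1 ≤ F.factorization p := by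
    rw [hsumfac] at hmain
    rw [hDNval] at hmain
    rw [hlegendre n le_rfl] at hmain
    omega
  have := (Nat.Prime.pow_dvd_iff_le_factorization hp hF0).2 (by omega : 1 ≤ F.factorization p)
  simpa using this

theorem list_sum_eq (l : List ℕ) : l.sum = ∑ i ∈ Finset.range l.length, l.getD i 0 := by
  induction l with
  | nil => simp
  | cons a l ih =>
    rw [List.sum_cons, List.length_cons, Finset.sum_range_succ']
    simp only [List.getD_cons_succ, List.getD_cons_zero]
    omega

theorem getD_mono (l : List ℕ) (hsort : l.Pairwise (· ≥ ·)) {i j : ℕ} (hij : i ≤ j)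
    (hj : j < l.length) : l.getD j 0 ≤ l.getD i 0 := by
  have hi : i < l.length := lt_of_le_of_lt hij hj
  have h := hsort.rel_get_of_le (a := ⟨i, hi⟩) (b := ⟨j, hj⟩) (by exact hij)
  rw [List.getD_eq_getElem l 0 hi, List.getD_eq_getElem l 0 hj]
  simpa using h

theorem getD_pos (l : List ℕ) (hpos : ∀ x ∈ l, 0 < x) {i : ℕ} (hi : i < l.length) :
    1 ≤ l.getD i 0 := by
  rw [List.getD_eq_getElem l 0 hi]
  exact hpos _ (l.getElem_mem hi)

theorem filter_prefix (l : List ℕ) (hsort : l.Pairwise (· ≥ ·)) (v : ℕ) :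
    ∀ i < (l.filter (fun a => v ≤ a)).length, v ≤ l.getD i 0 := by
  induction l with
  | nil => simp
  | cons h tl ih =>
    have hcons := List.pairwise_cons.1 hsort
    intro i hi
    by_cases hv : v ≤ h
    · rw [List.filter_cons_of_pos (by simpa using hv)] at hi
      cases i with
      | zero => simpa using hv
      | succ j =>
        rw [List.length_cons] at hi
        have := ih hcons.2 j (by omega)
        simpa [List.getD_cons_succ] using this
    · rw [List.filter_cons_of_neg (by simpa using hv)] at hi
      have hnil : tl.filter (fun a => v ≤ a) = [] := by
        apply List.filter_eq_nil_iff.2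
        intro b hb
        have hbh : b ≤ h := hcons.1 b hb
        simp only [decide_eq_true_eq]
        omega
      rw [hnil] at hi
      simp at hi

theorem filter_len_one (l : List ℕ) (hsort : l.Pairwise (· ≥ ·)) (hL : 2 ≤ l.length)
    (hgt : l.getD 1 0 + 1 ≤ l.getD 0 0) :
    (l.filter (fun a => l.getD 1 0 + 1 ≤ a)).length = 1 := by
  match l, hL with
  | h :: h2 :: t2, _ =>
    have hcons := List.pairwise_cons.1 hsort
    have hcons2 := List.pairwise_cons.1 hcons.2
    simp only [List.getD_cons_succ, List.getD_cons_zero] at hgt ⊢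
    rw [List.filter_cons_of_pos (by simpa using hgt)]
    have hnil : (h2 :: t2).filter (fun a => h2 + 1 ≤ a) = [] := by
      apply List.filter_eq_nil_iff.2
      intro b hb
      rcases List.mem_cons.1 hb with rfl | hb2
      · simp
      · have := hcons2.1 b hb2
        simp only [decide_eq_true_eq]
        omega
    rw [hnil]
    rfl

end AuxProof

/-- hook-length conditions forcing `p ∣ deg χ^α`. -/
theorem dvd_degree_of_hooks (p t d e : ℕ) (α : List ℕ) (hp : p.Prime)
    (hd : 1 ≤ d) (he : e < p ^ t)
    (hα : IsPartitionOf (d * p ^ t + e) α)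
    (h2 : 1 ≤ α.getD 1 0) (h1 : α.getD 1 0 < α.getD 0 0)
    (hh1 : (d : ℤ) * p ^ t < hookLen α 1 (α.getD 1 0))
    (hh2 : ((d : ℤ) - 1) * p ^ t < hookLen α 1 (α.getD 1 0 + 1))
    (hh3 : hookLen α 1 (α.getD 1 0 + 1) < (d : ℤ) * p ^ t)
    (hh4 : hookLen α 2 1 < (p : ℤ) ^ t) :
    (p : ℤ) ∣ charDegree α := by 
  obtain ⟨⟨hsort, hposl⟩, hsumα⟩ := hα
  have hL2 : 2 ≤ α.length := by
    by_contra hc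
    push_neg at hc
    have : α.getD 1 0 = 0 := List.getD_eq_default _ _ (by omega)
    omega
  have hposD : ∀ i < α.length, 1 ≤ α.getD i 0 := fun i hi => getD_pos α hposl hi
  -- abbreviations (opaque atoms for omega)
  set R := p ^ t with hRdef
  set Dr := d * R with hDrdef
  have hDr1 : (d + 1) * R = Dr + R := by rw [hDrdef]; ring
  have hDr2 : (d - 1) * R + R = Dr := by
    rw [hDrdef]
    have hdm : d - 1 + 1 = d := by omega
    calc (d - 1) * R + R = ((d - 1) + 1) * R := by ring
      _ = d * R := by rw [hdm]
  have hRD : R ≤ Dr := by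
    rw [hDrdef]
    calc R = 1 * R := (one_mul R).symm
      _ ≤ d * R := Nat.mul_le_mul_right R hd
  -- hookLen (2,1)
  have hfL : (α.filter (fun a => 1 ≤ a)).length = α.length := by
    rw [List.filter_eq_self.2]
    intro a ha
    exact decide_eq_true (hposl a ha)
  have h4N : α.getD 1 0 + α.length ≤ R + 1 := by
    unfold hookLen at hh4
    rw [hfL] at hh4
    have hz : (α.getD 1 0 : ℤ) + α.length ≤ (p : ℤ) ^ t + 1 := by
      push_cast at hh4 ⊢; linarith
    rw [hRdef]
    exact_mod_cast hz
  -- hookLen (1, a1+1)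
  have hc'1 : (α.filter (fun a => α.getD 1 0 + 1 ≤ a)).length = 1 :=
    filter_len_one α hsort hL2 (by omega)
  have h3N : α.getD 0 0 < Dr + α.getD 1 0 := by
    unfold hookLen at hh3
    rw [hc'1] at hh3
    have hz : (α.getD 0 0 : ℤ) < (d : ℤ) * (p : ℤ) ^ t + α.getD 1 0 := by
      push_cast at hh3 ⊢
      linarith
    rw [hDrdef, hRdef]
    exact_mod_cast hz
  have h2N : (d - 1) * R + α.getD 1 0 < α.getD 0 0 := by
    unfold hookLen at hh2
    rw [hc'1] at hh2
    have hcast : ((d - 1 : ℕ) : ℤ) = (d : ℤ) - 1 := Nat.cast_sub hd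
    have hz : ((d - 1 : ℕ) : ℤ) * (p : ℤ) ^ t + α.getD 1 0 < (α.getD 0 0 : ℤ) := by
      rw [hcast]
      push_cast at hh2
      push_cast
      linarith
    rw [hRdef]
    exact_mod_cast hz
  -- hookLen (1, a1)
  set c := (α.filter (fun a => α.getD 1 0 ≤ a)).length with hcdef
  have h1N : Dr + α.getD 1 0 < α.getD 0 0 + c := by
    unfold hookLen at hh1
    rw [← hcdef] at hh1
    have hz : (d : ℤ) * (p : ℤ) ^ t + α.getD 1 0 < (α.getD 0 0 : ℤ) + c := by
      push_cast at hh1 ⊢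
      linarith
    rw [hDrdef, hRdef]
    exact_mod_cast hz
  have hcL : c ≤ α.length := by
    rw [hcdef]
    exact List.length_filter_le _ _
  have hprefix : ∀ i < c, α.getD 1 0 ≤ α.getD i 0 := filter_prefix α hsort (α.getD 1 0)
  have heqa1 : ∀ i, 1 ≤ i → i < c → α.getD i 0 = α.getD 1 0 := by
    intro i hi1 hic
    have hle : α.getD i 0 ≤ α.getD 1 0 := getD_mono α hsort hi1 (lt_of_lt_of_le hic hcL)
    have hge := hprefix i hic
    omega
  -- r ≥ 2 and t ≥ 1
  have hR2 : 2 ≤ R := by omega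
  have ht1 : 1 ≤ t := by
    by_contra hc'
    push_neg at hc'
    have ht0 : t = 0 := by omega
    have h := hR2
    rw [hRdef, ht0, pow_zero] at h
    omega
  -- beta numbers
  set L := α.length with hLdef
  set b : ℕ → ℕ := fun i => α.getD i 0 + (L - 1 - i) with hbdef
  have hBdef : betaSet α = (Finset.range L).image b := rfl
  have hbstrict : ∀ i j : ℕ, i < j → j < L → b j < b i := by
    intro i j hij hj
    have hmono := getD_mono α hsort (le_of_lt hij) hj
    simp only [hbdef]
    omega
  have hinj : Set.InjOn b (Finset.range L) := by
    intro i hi j hj hbij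
    simp only [Finset.coe_range, Set.mem_Iio] at hi hj
    rcases lt_trichotomy i j with h | h | h
    · have := hbstrict i j h hj; omega
    · exact h
    · have := hbstrict j i h hi; omega
  have hBcard : (betaSet α).card = L := by
    rw [hBdef, Finset.card_image_of_injOn hinj, Finset.card_range]
  have hGauss : ∑ i ∈ Finset.range L, (L - 1 - i) = L.choose 2 := by
    have h5 := Finset.sum_range_reflect (fun i => i) L
    have h6 := Finset.sum_range_id_mul_two L
    have h7 : L.choose 2 = L * (L - 1) / 2 := Nat.choose_two_right L
    omega
  have hsumB : ∑ x ∈ betaSet α, x = (d * R + e) + ((betaSet α).card).choose 2 := by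
    rw [hBdef, Finset.sum_image (fun i hi j hj h => hinj hi hj h)]
    simp only [hbdef]
    rw [Finset.sum_add_distrib, hGauss, ← list_sum_eq α, hsumα]
    rw [← hBdef, hBcard]
  have hb0 : b 0 = α.getD 0 0 + (L - 1) := by simp [hbdef]
  have hb0mem : b 0 ∈ betaSet α := by
    rw [hBdef]
    exact Finset.mem_image_of_mem b (Finset.mem_range.2 (by omega))
  -- b 0 ≤ n
  have hb0n : b 0 ≤ d * R + e := by
    have hs : d * R + e = ∑ i ∈ Finset.range L, α.getD i 0 := by
      rw [← list_sum_eq α, hsumα]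
    have hsplit : ∑ i ∈ Finset.range L, α.getD i 0
        = α.getD 0 0 + ∑ i ∈ Finset.Ico 1 L, α.getD i 0 := by
      rw [Finset.range_eq_Ico, Finset.sum_eq_sum_Ico_succ_bot (by omega : 0 < L)]
    have hlow : (L - 1) ≤ ∑ i ∈ Finset.Ico 1 L, α.getD i 0 := by
      calc (L - 1) = ∑ _i ∈ Finset.Ico 1 L, 1 := by
            rw [Finset.sum_const, Nat.card_Ico, smul_eq_mul, mul_one]
        _ ≤ _ := Finset.sum_le_sum (fun i hi => hposD i (Finset.mem_Ico.1 hi).2)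
    omega
  have helem : ∀ x ∈ betaSet α, x ≤ d * R + e := by
    intro x hx
    rw [hBdef] at hx
    obtain ⟨i, hi, rfl⟩ := Finset.mem_image.1 hx
    rcases Nat.eq_zero_or_pos i with rfl | hipos
    · exact hb0n
    · have := hbstrict 0 i hipos (Finset.mem_range.1 hi)
      omega
  have hother : ∀ x ∈ betaSet α, x ≠ b 0 → x < R := by
    intro x hx hne
    rw [hBdef] at hx
    obtain ⟨i, hi, rfl⟩ := Finset.mem_image.1 hx
    have hiL := Finset.mem_range.1 hi
    have hipos : 1 ≤ i := by
      rcases Nat.eq_zero_or_pos i with rfl | h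
      · exact absurd rfl hne
      · exact h
    have hble : b i ≤ b 1 := by
      rcases Nat.lt_or_ge 1 i with h | h
      · exact le_of_lt (hbstrict 1 i h hiL)
      · have : i = 1 := by omega
        rw [this]
    have hb1 : b 1 = α.getD 1 0 + (L - 1 - 1) := rfl
    omega
  -- ⌊b 0 / R⌋ = d etc.
  have hdrb0 : Dr < b 0 ∧ b 0 < Dr + R := by
    constructor
    · omega
    · omega
  have hb0div : b 0 / R = d := by
    apply Nat.div_eq_of_lt_le
    · rw [← hDrdef]; omega
    · show b 0 < (d + 1) * R
      omega
  have hndiv : (d * R + e) / R = d := by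
    rw [Nat.add_comm, Nat.add_mul_div_right e d (show 0 < R by omega),
      Nat.div_eq_of_lt he, Nat.zero_add]
  have hsumdiv : ∑ x ∈ betaSet α, x / R = (d * R + e) / R := by
    rw [hndiv]
    rw [Finset.sum_eq_single_of_mem (b 0) hb0mem
      (fun x hx hne => Nat.div_eq_of_lt (hother x hx hne))]
    exact hb0div
  -- the extra congruent beta number
  set x0 := b 0 - Dr with hx0def
  have hx0ub : x0 ≤ α.getD 1 0 + L - 2 := by omega
  have hc1 : 1 ≤ c := by omega
  have hx0lb : α.getD 1 0 + L - c ≤ x0 := by omega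
  set i0 := α.getD 1 0 + L - 1 - x0 with hi0def
  have hi0a : 1 ≤ i0 := by omega
  have hi0b : i0 < c := by omega
  have hgetD : α.getD i0 0 = α.getD 1 0 := heqa1 i0 hi0a hi0b
  have hi0L : i0 < L := by omega
  have hbix : b i0 = x0 := by
    have hbi : b i0 = α.getD i0 0 + (L - 1 - i0) := rfl
    rw [hgetD] at hbi
    omega
  have hx0mem : x0 ∈ betaSet α := by
    rw [hBdef]
    exact Finset.mem_image.2 ⟨i0, Finset.mem_range.2 hi0L, hbix⟩
  have hx0lt : x0 < b 0 := by omega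
  have hdvd : R ∣ b 0 - x0 := by
    have hb0x0 : b 0 - x0 = Dr := by omega
    rw [hb0x0, hDrdef]
    exact dvd_mul_left R d
  have hptn : R ≤ d * R + e := by omega
  obtain ⟨F, hFeq, hFnat⟩ := MN_eq_nat (d * R + e) (betaSet α) hsumB
  have hpF := MN_val p hp (d * R + e) (by omega) (betaSet α) F hFnat hsumB helem
    t ht1 hptn x0 (b 0) hx0mem hb0mem hx0lt hdvd hsumdiv
  have hsumn : α.sum = d * R + e := by omega
  unfold charDegree charVal
  rw [hsumn, hFeq]
  exact Int.natCast_dvd_natCast.2 hpF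
end

section
/- Let p be a prime, t ≥ 0, and write n = d_t p^t + e_t with 0 ≤ e_t < p^t. Assume d_t ≠ 0, e_t ≠ 0, and let α = (c, 1^{n−c}) be a hook partition with e_t ≤ n − c < p^t. Then p divides the degree of the irreducible character χ^α of S_n. -/
/-- Abacus display of the hook `(a, 1^b)` on `m` beads (`1 ≤ a`, `b < m`). -/
def hookB (a b m : ℕ) : Finset ℕ :=
  insert (a + m - 1) (Finset.range (m - b - 1) ∪ Finset.Ico (m - b) m)

lemma mem_hookB {a b m x : ℕ} (ha : 1 ≤ a) (hb : b < m) :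
    x ∈ hookB a b m ↔ x < m - b - 1 ∨ (m - b ≤ x ∧ x < m) ∨ x = a + m - 1 := by
  simp only [hookB, Finset.mem_insert, Finset.mem_union, Finset.mem_range, Finset.mem_Ico]
  omega

lemma sign_filter (B : Finset ℕ) (x : ℕ) :
    B.filter (fun y => x - 1 < y ∧ y < x) = ∅ := by
  ext y
  simp only [Finset.mem_filter, Finset.notMem_empty, iff_false, not_and]
  rintro - h1 h2
  omega

lemma MN_range (μ : List ℕ) (m : ℕ) : MN (List.replicate 0 1) (Finset.range m) = 1 := rfl

lemma MN_hook_s7 : ∀ n a b m, a + b = n → 1 ≤ a → b < m →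
    MN (List.replicate n 1) (hookB a b m) = ((n - 1).choose b : ℤ) := by
  intro n
  induction n with
  | zero => intro a b m h ha hb; omega
  | succ n IH =>
    intro a b m h ha hb
    rw [List.replicate_succ, MN]
    rcases Nat.eq_or_lt_of_le ha with ha1 | ha2
    · -- a = 1
      rcases Nat.eq_zero_or_pos b with hb0 | hb1
      · -- a = 1, b = 0, so n = 0
        subst hb0
        have hn : n = 0 := by omega
        subst hn
        have hF : (hookB a 0 m).filter (fun x => 1 ≤ x ∧ x - 1 ∉ hookB a 0 m) = {a + m - 1} := by
          ext x
          simp only [Finset.mem_filter, Finset.mem_singleton, mem_hookB ha hb]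
          omega
        rw [hF, Finset.sum_singleton, sign_filter, Finset.card_empty, pow_zero, one_mul]
        have : MN (List.replicate 0 1) (insert (a + m - 1 - 1) ((hookB a 0 m).erase (a + m - 1))) = 1 := rfl
        rw [this]; norm_num
      · -- a = 1, b ≥ 1
        have hF : (hookB a b m).filter (fun x => 1 ≤ x ∧ x - 1 ∉ hookB a b m) = {m - b} := by
          ext x
          simp only [Finset.mem_filter, Finset.mem_singleton, mem_hookB ha hb]
          omega
        rw [hF, Finset.sum_singleton, sign_filter, Finset.card_empty, pow_zero, one_mul]
        have hset : insert (m - b - 1) ((hookB a b m).erase (m - b)) = hookB a (b - 1) m := by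
          ext x
          simp only [Finset.mem_insert, Finset.mem_erase, mem_hookB ha hb,
            mem_hookB ha (show b - 1 < m by omega)]
          omega
        rw [hset, IH a (b - 1) m (by omega) ha (by omega)]
        have hbn : b = n := by omega
        subst hbn
        simp [Nat.succ_sub_one, Nat.choose_self]
    · -- a ≥ 2
      rcases Nat.eq_zero_or_pos b with hb0 | hb1
      · subst hb0
        have hF : (hookB a 0 m).filter (fun x => 1 ≤ x ∧ x - 1 ∉ hookB a 0 m) = {a + m - 1} := by
          ext x
          simp only [Finset.mem_filter, Finset.mem_singleton, mem_hookB ha hb]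
          omega
        rw [hF, Finset.sum_singleton, sign_filter, Finset.card_empty, pow_zero, one_mul]
        have hset : insert (a + m - 1 - 1) ((hookB a 0 m).erase (a + m - 1)) = hookB (a - 1) 0 m := by
          ext x
          simp only [Finset.mem_insert, Finset.mem_erase, mem_hookB ha hb,
            mem_hookB (show 1 ≤ a - 1 by omega) hb]
          omega
        rw [hset, IH (a - 1) 0 m (by omega) (by omega) hb]
        simp [Nat.choose_zero_right]
      · -- a ≥ 2, b ≥ 1: two candidates
        have hne : m - b ≠ a + m - 1 := by omega
        have hF : (hookB a b m).filter (fun x => 1 ≤ x ∧ x - 1 ∉ hookB a b m)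
            = {m - b, a + m - 1} := by
          ext x
          simp only [Finset.mem_filter, Finset.mem_insert, Finset.mem_singleton, mem_hookB (by omega : 1 ≤ a) hb]
          omega
        rw [hF, Finset.sum_pair hne, sign_filter, sign_filter, Finset.card_empty, pow_zero,
          one_mul, one_mul]
        have hset1 : insert (m - b - 1) ((hookB a b m).erase (m - b)) = hookB a (b - 1) m := by
          ext x
          simp only [Finset.mem_insert, Finset.mem_erase, mem_hookB (by omega : 1 ≤ a) hb,
            mem_hookB (by omega : 1 ≤ a) (show b - 1 < m by omega)]
          omega
        have hset2 : insert (a + m - 1 - 1) ((hookB a b m).erase (a + m - 1)) = hookB (a - 1) b m := by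
          ext x
          simp only [Finset.mem_insert, Finset.mem_erase, mem_hookB (by omega : 1 ≤ a) hb,
            mem_hookB (show 1 ≤ a - 1 by omega) hb]
          omega
        rw [hset1, hset2, IH a (b - 1) m (by omega) (by omega) (by omega),
          IH (a - 1) b m (by omega) (by omega) hb]
        obtain ⟨b', rfl⟩ : ∃ b', b = b' + 1 := ⟨b - 1, by omega⟩
        obtain ⟨k, rfl⟩ : ∃ k, n = k + 1 := ⟨n - 1, by omega⟩
        have hpascal : (k + 1 + 1 - 1).choose (b' + 1)
            = (k + 1 - 1).choose b' + (k + 1 - 1).choose (b' + 1) := by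
          simp [Nat.choose_succ_succ]
        rw [hpascal]
        push_cast
        ring

lemma betaSet_hook (c r : ℕ) (hc : 1 ≤ c) :
    betaSet (c :: List.replicate r 1) = hookB c r (r + 1) := by
  ext x
  simp only [betaSet, betaSetN, List.length_cons, List.length_replicate,
    Finset.mem_image, Finset.mem_range, mem_hookB hc (Nat.lt_succ_self r)]
  constructor
  · rintro ⟨i, hi, rfl⟩
    match i with
    | 0 =>
      simp only [List.getD_cons_zero]
      omega
    | Nat.succ j =>
      have hj : j < r := by omega
      rw [List.getD_cons_succ, show (List.replicate r 1).getD j 0 = 1 by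
        simp [List.getD, List.getElem?_replicate, hj]]
      omega
  · intro hx
    rcases hx with h | h | h
    · omega
    · refine ⟨r + 1 - x, by omega, ?_⟩
      have hj : r - x < r := by omega
      rw [show r + 1 - x = (r - x) + 1 by omega, List.getD_cons_succ,
        show (List.replicate r 1).getD (r - x) 0 = 1 by
          simp [List.getD, List.getElem?_replicate, hj]]
      omega
    · exact ⟨0, by omega, by simp only [List.getD_cons_zero]; omega⟩


lemma charDegree_hook (c r : ℕ) (hc : 1 ≤ c) :
    charDegree (c :: List.replicate r 1) = ((c + r - 1).choose r : ℤ) := by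
  have hsum : (c :: List.replicate r 1).sum = c + r := by simp
  rw [charDegree, charVal, hsum, betaSet_hook c r hc,
    MN_hook_s7 (c + r) c r (r + 1) rfl hc (Nat.lt_succ_self r)]

/-- hook partitions `(c, 1^{n-c})` with `e_t ≤ n - c < p^t`
label characters of degree divisible by `p`. -/
theorem dvd_degree_hook_partition (p t d e n c : ℕ) (hp : p.Prime)
    (hn : n = d * p ^ t + e) (hd : d ≠ 0) (he : e ≠ 0) (he' : e < p ^ t)
    (hc : c ≤ n) (h1 : e ≤ n - c) (h2 : n - c < p ^ t) :
    (p : ℤ) ∣ charDegree (c :: List.replicate (n - c) 1) := by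
  have hq : p ^ t ≤ d * p ^ t := Nat.le_mul_of_pos_left _ (Nat.pos_of_ne_zero hd)
  have hc1 : 1 ≤ c := by omega
  rw [charDegree_hook c (n - c) hc1, show c + (n - c) = n by omega]
  rw [Int.natCast_dvd_natCast]
  set r := n - c with hr
  have ht1 : 1 ≤ t := by
    rcases Nat.eq_zero_or_pos t with h | h
    · subst h; simp at he'; omega
    · exact h
  have hrn : r ≤ n - 1 := by omega
  have hptn : p ^ t ≤ n - 1 := by omega
  have hlog : t ≤ Nat.log p (n - 1) := (Nat.le_log_iff_pow_le hp.one_lt (by omega)).mpr hptn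
  have hmod : (n - 1 - r) % p ^ t = p ^ t + e - 1 - r := by
    have hdd : d * p ^ t = (d - 1) * p ^ t + p ^ t := by
      rcases Nat.exists_eq_add_of_le (Nat.one_le_iff_ne_zero.mpr hd) with ⟨k, hk⟩
      subst hk
      rw [show 1 + k - 1 = k by omega, Nat.add_mul, one_mul, Nat.add_comm]
    have hrep : n - 1 - r = (p ^ t + e - 1 - r) + (d - 1) * p ^ t := by omega
    rw [hrep, Nat.add_mul_mod_self_right, Nat.mod_eq_of_lt (by omega)]
  have hemul := hp.emultiplicity_choose hrn (Nat.lt_succ_self _)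
  have hmem : t ∈ Finset.filter (fun i => p ^ i ≤ r % p ^ i + (n - 1 - r) % p ^ i)
      (Finset.Ico 1 (Nat.log p (n - 1) + 1)) := by
    simp only [Finset.mem_filter, Finset.mem_Ico]
    refine ⟨⟨ht1, by omega⟩, ?_⟩
    rw [Nat.mod_eq_of_lt h2, hmod]
    omega
  have hcard : 0 < (Finset.filter (fun i => p ^ i ≤ r % p ^ i + (n - 1 - r) % p ^ i)
      (Finset.Ico 1 (Nat.log p (n - 1) + 1))).card := Finset.card_pos.mpr ⟨t, hmem⟩
  have h1le : (1 : ℕ∞) ≤ emultiplicity p ((n - 1).choose r) := by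
    rw [hemul]
    exact_mod_cast hcard
  have hdvd : p ^ 1 ∣ (n - 1).choose r := pow_dvd_of_le_emultiplicity (by simpa using h1le)
  simpa using hdvd
end

section
/- For b ≥ 0 and a ≥ 0 with a + 2b ≥ 3, the irreducible character of S_{a+2b} labeled by (a + 2b − 2, 1, 1) takes the value −b + (a−1)(a−2)/2 on the conjugacy class of cycle type (2^b, 1^a). -/
lemma MN_cons (k : ℕ) (μ : List ℕ) (B : Finset ℕ) :
    MN (k :: μ) B = ∑ x ∈ B.filter (fun x => k ≤ x ∧ x - k ∉ B),
      (-1) ^ (B.filter (fun y => x - k < y ∧ y < x)).card * MN μ (insert (x - k) (B.erase x)) := rfl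

-- trivial lemma

lemma MN_triv : ∀ (μ : List ℕ) (s : ℕ), (∀ k ∈ μ, 0 < k) → μ.sum ≤ s →
    MN μ ({s+2, 1, 0} : Finset ℕ) = 1
  | [], s, _, _ => rfl
  | k :: μ, s, hpos, hsum => by
    have hk1 : 0 < k := hpos k (by simp)
    have hks : k ≤ s := by have := hsum; simp [List.sum_cons] at this; omega
    rw [MN_cons]
    have hf : ({s+2, 1, 0} : Finset ℕ).filter
        (fun x => k ≤ x ∧ x - k ∉ ({s+2, 1, 0} : Finset ℕ)) = {s+2} := by
      ext x; simp [Finset.mem_filter]; omega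
    rw [hf, Finset.sum_singleton]
    have hg : ({s+2, 1, 0} : Finset ℕ).filter (fun y => s+2-k < y ∧ y < s+2) = ∅ := by
      ext y; simp [Finset.mem_filter]; omega
    have hset : insert (s+2-k) (({s+2, 1, 0} : Finset ℕ).erase (s+2)) = {(s-k)+2, 1, 0} := by
      ext y; simp [Finset.mem_insert, Finset.mem_erase]; omega
    rw [hg, hset, MN_triv μ (s-k) (fun x hx => hpos x (by simp [hx])) (by simp [List.sum_cons] at hsum; omega)]
    simp

lemma sum_rep (n v : ℕ) : (List.replicate n v).sum = n * v := by
  simp [List.sum_replicate, smul_eq_mul]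

lemma MN_hook_s13 : ∀ s : ℕ, 2 ≤ s → MN (List.replicate s 1) ({s+1, 2, 0} : Finset ℕ) = (s : ℤ) - 1 := by
  intro s
  induction s with
  | zero => omega
  | succ n ih =>
    intro hs
    rcases Nat.lt_or_ge n 3 with hn | hn
    · match n, hs with
      | 1, _ =>
        rw [show List.replicate 2 1 = [1, 1] from rfl, MN_cons]
        have hf : ({3, 2, 0} : Finset ℕ).filter
            (fun x => 1 ≤ x ∧ x - 1 ∉ ({3, 2, 0} : Finset ℕ)) = {2} := by decide
        rw [show ((1:ℕ)+1+1) = 3 from rfl, hf, Finset.sum_singleton]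
        have hg : ({3, 2, 0} : Finset ℕ).filter (fun y => 2-1 < y ∧ y < 2) = ∅ := by decide
        have hset : insert (2-1) (({3, 2, 0} : Finset ℕ).erase 2) = {1+2, 1, 0} := by decide
        rw [hg, hset, MN_triv [1] 1 (by simp) (by simp)]
        norm_num
      | 2, _ =>
        rw [show List.replicate 3 1 = 1 :: List.replicate 2 1 from rfl, MN_cons,
          show ((2:ℕ)+1+1) = 4 from rfl]
        have hf : ({4, 2, 0} : Finset ℕ).filter
            (fun x => 1 ≤ x ∧ x - 1 ∉ ({4, 2, 0} : Finset ℕ)) = {4, 2} := by decide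
        rw [hf, Finset.sum_pair (by norm_num)]
        have hg1 : ({4, 2, 0} : Finset ℕ).filter (fun y => 4-1 < y ∧ y < 4) = ∅ := by decide
        have hg2 : ({4, 2, 0} : Finset ℕ).filter (fun y => 2-1 < y ∧ y < 2) = ∅ := by decide
        have hs1 : insert (4-1) (({4, 2, 0} : Finset ℕ).erase 4) = {2+1, 2, 0} := by decide
        have hs2 : insert (2-1) (({4, 2, 0} : Finset ℕ).erase 2) = {2+2, 1, 0} := by decide
        rw [hg1, hg2, hs1, hs2, ih (by omega), MN_triv (List.replicate 2 1) 2 (by simp) (by simp [sum_rep])]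
        norm_num
    · have h2 : 2 ≤ n := by omega
      rw [show List.replicate (n+1) 1 = 1 :: List.replicate n 1 from rfl, MN_cons,
        show n+1+1 = n+2 from rfl]
      have hf : ({n+2, 2, 0} : Finset ℕ).filter
          (fun x => 1 ≤ x ∧ x - 1 ∉ ({n+2, 2, 0} : Finset ℕ)) = {n+2, 2} := by
        ext x; simp [Finset.mem_filter]; omega
      rw [hf, Finset.sum_pair (by omega)]
      have hg1 : ({n+2, 2, 0} : Finset ℕ).filter (fun y => n+2-1 < y ∧ y < n+2) = ∅ := by
        ext y; simp [Finset.mem_filter]; omega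
      have hg2 : ({n+2, 2, 0} : Finset ℕ).filter (fun y => 2-1 < y ∧ y < 2) = ∅ := by
        ext y; simp [Finset.mem_filter]
      have hs1 : insert (n+2-1) (({n+2, 2, 0} : Finset ℕ).erase (n+2)) = {n+1, 2, 0} := by
        ext y; simp [Finset.mem_insert, Finset.mem_erase]; omega
      have hs2 : insert (2-1) (({n+2, 2, 0} : Finset ℕ).erase 2) = {n+2, 1, 0} := by
        ext y; simp [Finset.mem_insert, Finset.mem_erase]; omega
      rw [hg1, hg2, hs1, hs2, ih h2,
        show ({n+2, 1, 0} : Finset ℕ) = {(n)+2, 1, 0} from rfl,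
        MN_triv (List.replicate n 1) n (by simp) (by simp [sum_rep])]
      simp

lemma MN_id : ∀ a : ℕ, 3 ≤ a →
    MN (List.replicate a 1) ({a, 2, 1} : Finset ℕ) = ((a:ℤ) - 1) * ((a:ℤ) - 2) / 2 := by
  intro a
  induction a with
  | zero => omega
  | succ n ih =>
    intro ha
    rcases Nat.lt_or_ge n 3 with hn | hn
    · match n, ha with
      | 2, _ =>
        rw [show List.replicate 3 1 = 1 :: List.replicate 2 1 from rfl, MN_cons,
          show ((2:ℕ)+1) = 3 from rfl]
        have hf : ({3, 2, 1} : Finset ℕ).filter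
            (fun x => 1 ≤ x ∧ x - 1 ∉ ({3, 2, 1} : Finset ℕ)) = {1} := by decide
        rw [hf, Finset.sum_singleton]
        have hg : ({3, 2, 1} : Finset ℕ).filter (fun y => 1-1 < y ∧ y < 1) = ∅ := by decide
        have hset : insert (1-1) (({3, 2, 1} : Finset ℕ).erase 1) = {2+1, 2, 0} := by decide
        rw [hg, hset, MN_hook_s13 2 le_rfl]
        norm_num
    · -- n ≥ 3 : B = {n+1, 2, 1}, two candidates: n+1 -> {n,2,1}, 1 -> {n+1,2,0}
      rw [show List.replicate (n+1) 1 = 1 :: List.replicate n 1 from rfl, MN_cons]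
      have hf : ({n+1, 2, 1} : Finset ℕ).filter
          (fun x => 1 ≤ x ∧ x - 1 ∉ ({n+1, 2, 1} : Finset ℕ)) = {n+1, 1} := by
        ext x; simp [Finset.mem_filter]; omega
      rw [hf, Finset.sum_pair (by omega)]
      have hg1 : ({n+1, 2, 1} : Finset ℕ).filter (fun y => n+1-1 < y ∧ y < n+1) = ∅ := by
        ext y; simp [Finset.mem_filter]
      have hg2 : ({n+1, 2, 1} : Finset ℕ).filter (fun y => 1-1 < y ∧ y < 1) = ∅ := by
        ext y; simp [Finset.mem_filter]; omega
      have hs1 : insert (n+1-1) (({n+1, 2, 1} : Finset ℕ).erase (n+1)) = {n, 2, 1} := by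
        ext y; simp [Finset.mem_insert, Finset.mem_erase]; omega
      have hs2 : insert (1-1) (({n+1, 2, 1} : Finset ℕ).erase 1) = {n+1, 2, 0} := by
        ext y; simp [Finset.mem_insert, Finset.mem_erase]; omega
      rw [hg1, hg2, hs1, hs2, ih hn, MN_hook_s13 n (by omega)]
      simp only [Finset.card_empty, pow_zero, one_mul]
      have hcast : ((n:ℤ)+1) = ((n+1 : ℕ) : ℤ) := by push_cast; ring
      push_cast
      have hx : ((n:ℤ)+1-1)*((n:ℤ)+1-2) = ((n:ℤ)-1)*((n:ℤ)-2) + 2*((n:ℤ)-1) := by ring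
      omega

lemma MN_two_step (n : ℕ) (hn : 5 ≤ n) (μ : List ℕ) :
    MN (2 :: μ) ({n, 2, 1} : Finset ℕ) = MN μ ({n-2, 2, 1} : Finset ℕ) - MN μ ({n, 1, 0} : Finset ℕ) := by
  rw [MN_cons]
  have hf : ({n, 2, 1} : Finset ℕ).filter
      (fun x => 2 ≤ x ∧ x - 2 ∉ ({n, 2, 1} : Finset ℕ)) = {n, 2} := by
    ext x; simp [Finset.mem_filter]; omega
  rw [hf, Finset.sum_pair (by omega)]
  have hg1 : ({n, 2, 1} : Finset ℕ).filter (fun y => n-2 < y ∧ y < n) = ∅ := by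
    ext y; simp [Finset.mem_filter]; omega
  have hg2 : ({n, 2, 1} : Finset ℕ).filter (fun y => 2-2 < y ∧ y < 2) = {1} := by
    ext y; simp [Finset.mem_filter]; omega
  have hs1 : insert (n-2) (({n, 2, 1} : Finset ℕ).erase n) = {n-2, 2, 1} := by
    ext y; simp [Finset.mem_insert, Finset.mem_erase]; omega
  have hs2 : insert (2-2) (({n, 2, 1} : Finset ℕ).erase 2) = {n, 1, 0} := by
    ext y; simp [Finset.mem_insert, Finset.mem_erase]; omega
  rw [hg1, hg2, hs1, hs2]
  simp; ring

lemma mem_pos {b a : ℕ} : ∀ k ∈ List.replicate b 2 ++ List.replicate a 1, 0 < k := by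
  intro k hk
  simp [List.mem_append, List.mem_replicate] at hk
  omega

lemma sum_mix (b a : ℕ) : (List.replicate b 2 ++ List.replicate a 1).sum = 2*b + a := by
  simp [List.sum_append, sum_rep]; ring

lemma MN_main : ∀ b a : ℕ, 3 ≤ a + 2*b →
    MN (List.replicate b 2 ++ List.replicate a 1) ({a + 2*b, 2, 1} : Finset ℕ) =
      -(b : ℤ) + ((a:ℤ) - 1) * ((a:ℤ) - 2) / 2 := by
  intro b
  induction b with
  | zero =>
    intro a ha
    simpa using MN_id a (by omega)
  | succ m ih =>
    intro a ha
    rw [show List.replicate (m+1) 2 ++ List.replicate a 1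
        = 2 :: (List.replicate m 2 ++ List.replicate a 1) from rfl]
    rcases Nat.lt_or_ge (a + 2*(m+1)) 5 with hn | hn
    · -- n = 3 or 4
      have h4 : a + 2*(m+1) = 3 ∨ a + 2*(m+1) = 4 := by omega
      -- only one candidate x = 2, giving -1
      rw [MN_cons]
      have hf : ({a + 2*(m+1), 2, 1} : Finset ℕ).filter
          (fun x => 2 ≤ x ∧ x - 2 ∉ ({a + 2*(m+1), 2, 1} : Finset ℕ)) = {2} := by
        ext x; simp [Finset.mem_filter]; omega
      rw [hf, Finset.sum_singleton]
      have hg : ({a + 2*(m+1), 2, 1} : Finset ℕ).filter (fun y => 2-2 < y ∧ y < 2) = {1} := by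
        ext y; simp [Finset.mem_filter]; omega
      have hs : insert (2-2) (({a + 2*(m+1), 2, 1} : Finset ℕ).erase 2)
          = {(a + 2*m)+2, 1, 0} := by
        ext y; simp [Finset.mem_insert, Finset.mem_erase]; omega
      rw [hg, hs, MN_triv _ (a + 2*m) mem_pos (by rw [sum_mix]; omega)]
      have hax : a = 0 ∧ m = 1 ∨ a = 1 ∧ m = 0 ∨ a = 2 ∧ m = 0 := by omega
      rcases hax with ⟨rfl, rfl⟩ | ⟨rfl, rfl⟩ | ⟨rfl, rfl⟩ <;> norm_num
    · rw [MN_two_step _ hn]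
      have e1 : (a + 2*(m+1)) - 2 = a + 2*m := by omega
      rw [e1, ih a (by omega),
        show ({a + 2*(m+1), 1, 0} : Finset ℕ) = {(a + 2*m)+2, 1, 0} from by rw [show a+2*(m+1) = (a+2*m)+2 from by ring],
        MN_triv _ (a + 2*m) mem_pos (by rw [sum_mix]; omega)]
      push_cast; ring

lemma betaSet_row11 (m : ℕ) : betaSet (m :: [1,1]) = {m+2, 2, 1} := by
  show (Finset.range 3).image _ = _
  rw [show Finset.range 3 = {0,1,2} from rfl]
  simp [Finset.image_insert]

/-- `χ^{(a+2b-2,1,1)}` on the class of cycle type `(2^b, 1^a)`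
equals `-b + (a-1)(a-2)/2`. -/
theorem charVal_two_ones (a b : ℕ) (h : 3 ≤ a + 2 * b) :
    charVal ((a + 2 * b - 2) :: [1, 1])
        (List.replicate b 2 ++ List.replicate a 1) =
      -(b : ℤ) + ((a : ℤ) - 1) * ((a : ℤ) - 2) / 2 := by
  rw [charVal, betaSet_row11, show a + 2 * b - 2 + 2 = a + 2 * b from by omega]
  exact MN_main b a h
end
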